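/- arXiv:1706.01738 — 3 statements merged into one kernel-verified Lean document; each statement's English description precedes it below -/
import Mathlib

section
/- For the lattice triangle P with vertices v₁=(0,1), v₂=(−1,−7), v₃=(1,−4), the coefficient of n² in the Ehrhart matrix polynomial L²(nP) is the matrix [[−1/12, −1/8],[−1/8, −23/12]], which is negative definite. -/
open Finset Matrix

noncomputable def coeR (x : Fin 2 → ℤ) : Fin 2 → ℝ := fun i => (x i : ℝ)

/-- The rank-one symmetric matrix `u uᵗ` associated to `u ∈ ℝ²`. -/
noncomputable def msq (u : Fin 2 → ℝ) : Matrix (Fin 2) (Fin 2) ℝ := Matrix.vecMulVec u u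

lemma mem_hull3 {A B C q : Fin 2 → ℝ} {a b c : ℝ} (ha : 0 ≤ a) (hb : 0 ≤ b) (hc : 0 ≤ c)
    (hsum : a + b + c = 1) (hq : q = a • A + b • B + c • C) :
    q ∈ convexHull ℝ ({A, B, C} : Set (Fin 2 → ℝ)) := by
  have h := Finset.centerMass_mem_convexHull (t := (Finset.univ : Finset (Fin 3)))
    (w := ![a,b,c]) (z := ![A,B,C]) (s := ({A, B, C} : Set (Fin 2 → ℝ)))
    (by intro i _; fin_cases i <;> simpa)
    (by simp [Fin.sum_univ_three]; linarith)
    (by intro i _; fin_cases i <;> simp)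
  rwa [Finset.centerMass_eq_of_sum_1 _ _ (by simp [Fin.sum_univ_three]; linarith),
    show (∑ i, (![a,b,c]) i • (![A,B,C]) i) = a • A + b • B + c • C by
      simp [Fin.sum_univ_three], ← hq] at h

lemma mem_scaled (P : Set (Fin 2 → ℝ))
    (hP : P = convexHull ℝ {coeR ![0, 1], coeR ![-1, -7], coeR ![1, -4]})
    (n : ℕ) (p : Fin 2 → ℝ) :
    p ∈ (fun q => (n : ℝ) • q) '' P ↔
      (0 ≤ 8 * p 0 - p 1 + n ∧ 0 ≤ -3 * p 0 + 2 * p 1 + 11 * n ∧ 0 ≤ -5 * p 0 - p 1 + n) := by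
  have hA0 : coeR ![0, 1] 0 = 0 := by simp [coeR]
  have hA1 : coeR ![0, 1] 1 = 1 := by simp [coeR]
  have hB0 : coeR ![-1, -7] 0 = -1 := by simp [coeR]
  have hB1 : coeR ![-1, -7] 1 = -7 := by simp [coeR]
  have hC0 : coeR ![1, -4] 0 = 1 := by simp [coeR]
  have hC1 : coeR ![1, -4] 1 = -4 := by simp [coeR]
  constructor
  · rintro ⟨q, hq, rfl⟩
    -- q ∈ P satisfies the n=1 inequalities
    have key : 0 ≤ 8 * q 0 - q 1 + 1 ∧ 0 ≤ -3 * q 0 + 2 * q 1 + 11 ∧ 0 ≤ -5 * q 0 - q 1 + 1 := by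
      rw [hP] at hq
      have hconv : Convex ℝ {r : Fin 2 → ℝ |
          0 ≤ 8 * r 0 - r 1 + 1 ∧ 0 ≤ -3 * r 0 + 2 * r 1 + 11 ∧ 0 ≤ -5 * r 0 - r 1 + 1} := by
        intro r1 hr1 r2 hr2 a b ha hb hab
        obtain ⟨h11, h12, h13⟩ := hr1
        obtain ⟨h21, h22, h23⟩ := hr2
        refine ⟨?_, ?_, ?_⟩ <;>
        · simp only [Pi.add_apply, Pi.smul_apply, smul_eq_mul]
          nlinarith [mul_nonneg ha h11, mul_nonneg hb h21, mul_nonneg ha h12,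
            mul_nonneg hb h22, mul_nonneg ha h13, mul_nonneg hb h23]
      have hsub := convexHull_min (s := {coeR ![0, 1], coeR ![-1, -7], coeR ![1, -4]}) ?_ hconv
      · exact hsub hq
      · rintro r (rfl | rfl | rfl) <;>
          refine ⟨?_, ?_, ?_⟩ <;> simp [hA0, hA1, hB0, hB1, hC0, hC1] <;> norm_num
    obtain ⟨k1, k2, k3⟩ := key
    have hn : (0:ℝ) ≤ n := Nat.cast_nonneg n
    simp only [Pi.smul_apply, smul_eq_mul]
    refine ⟨?_, ?_, ?_⟩ <;> nlinarith
  · rintro ⟨h1, h2, h3⟩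
    rcases Nat.eq_zero_or_pos n with rfl | hn
    · have hp0 : p 0 = 0 := by push_cast at h1 h2 h3; linarith
      have hp1 : p 1 = 0 := by push_cast at h1 h2 h3; linarith
      have hp : p = 0 := by
        funext i; fin_cases i
        · exact hp0
        · exact hp1
      refine ⟨coeR ![0, 1], by rw [hP]; exact subset_convexHull ℝ _ (by left; rfl), ?_⟩
      simp [hp]
    · have hn' : (0:ℝ) < n := by exact_mod_cast hn
      have h13 : (13 : ℝ) * n ≠ 0 := by positivity
      refine ⟨(n : ℝ)⁻¹ • p, ?_, ?_⟩
      · rw [hP]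
        refine mem_hull3 (a := (-3 * p 0 + 2 * p 1 + 11 * n) / (13 * n))
          (b := (-5 * p 0 - p 1 + n) / (13 * n))
          (c := (8 * p 0 - p 1 + n) / (13 * n))
          (div_nonneg h2 (by positivity)) (div_nonneg h3 (by positivity))
          (div_nonneg h1 (by positivity)) (by field_simp; ring) ?_
        funext i
        fin_cases i <;>
        · simp [coeR]
          field_simp
          ring
      · simp only
        rw [smul_smul, mul_inv_cancel₀ (ne_of_gt hn'), one_smul]

noncomputable def T (n : ℕ) : Finset (ℤ × ℤ) :=
  ((Finset.Icc (-(n:ℤ)) n) ×ˢ (Finset.Icc (-7*(n:ℤ)) n)).filter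
    (fun p => 0 ≤ 8*p.1 - p.2 + n ∧ 0 ≤ -3*p.1 + 2*p.2 + 11*n ∧ 0 ≤ -5*p.1 - p.2 + n)

lemma L_eq (P : Set (Fin 2 → ℝ))
    (hP : P = convexHull ℝ {coeR ![0, 1], coeR ![-1, -7], coeR ![1, -4]})
    (L : ℕ → Finset (Fin 2 → ℤ))
    (hL : ∀ n x, x ∈ L n ↔ coeR x ∈ (fun p => (n : ℝ) • p) '' P) (n : ℕ) :
    L n = (T n).image (fun p => ![p.1, p.2]) := by
  ext x
  rw [hL, mem_scaled P hP]
  have hx0 : coeR x 0 = (x 0 : ℝ) := rfl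
  have hx1 : coeR x 1 = (x 1 : ℝ) := rfl
  constructor
  · rintro ⟨h1, h2, h3⟩
    rw [hx0, hx1] at h1 h2 h3
    have h1' : (0:ℤ) ≤ 8 * x 0 - x 1 + n := by exact_mod_cast h1
    have h2' : (0:ℤ) ≤ -3 * x 0 + 2 * x 1 + 11 * n := by exact_mod_cast h2
    have h3' : (0:ℤ) ≤ -5 * x 0 - x 1 + n := by exact_mod_cast h3
    refine Finset.mem_image.mpr ⟨(x 0, x 1), ?_, ?_⟩
    · simp only [T, Finset.mem_filter, Finset.mem_product, Finset.mem_Icc]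
      exact ⟨⟨⟨by linarith, by linarith⟩, by linarith, by linarith⟩, h1', h2', h3'⟩
    · funext i; fin_cases i <;> rfl
  · intro hx
    obtain ⟨q, hq, rfl⟩ := Finset.mem_image.mp hx
    simp only [T, Finset.mem_filter, Finset.mem_product, Finset.mem_Icc] at hq
    obtain ⟨-, h1, h2, h3⟩ := hq
    have e0 : coeR ![q.1, q.2] 0 = (q.1 : ℝ) := by simp [coeR]
    have e1 : coeR ![q.1, q.2] 1 = (q.2 : ℝ) := by simp [coeR]
    rw [e0, e1]
    refine ⟨?_, ?_, ?_⟩ <;> exact_mod_cast ‹_›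

lemma sum_eq (P : Set (Fin 2 → ℝ))
    (hP : P = convexHull ℝ {coeR ![0, 1], coeR ![-1, -7], coeR ![1, -4]})
    (L : ℕ → Finset (Fin 2 → ℤ))
    (hL : ∀ n x, x ∈ L n ↔ coeR x ∈ (fun p => (n : ℝ) • p) '' P) (n : ℕ) :
    (∑ x ∈ L n, msq (coeR x)) =
      !![((∑ p ∈ T n, p.1*p.1 : ℤ) : ℝ), ((∑ p ∈ T n, p.1*p.2 : ℤ) : ℝ);
         ((∑ p ∈ T n, p.1*p.2 : ℤ) : ℝ), ((∑ p ∈ T n, p.2*p.2 : ℤ) : ℝ)] := by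
  rw [L_eq P hP L hL n, Finset.sum_image (by
    intro a _ b _ h
    have h0 := congrFun h 0
    have h1 := congrFun h 1
    exact Prod.ext (by simpa using h0) (by simpa using h1))]
  ext i j
  fin_cases i <;> fin_cases j <;>
      simp [msq, Matrix.vecMulVec, coeR, Matrix.sum_apply] <;>
    (push_cast; exact Finset.sum_congr rfl (fun p _ => by ring))


set_option maxRecDepth 100000 in
/-- for the lattice triangle with vertices `(0,1)`, `(−1,−7)`, `(1,−4)`,
the coefficient of `n²` in the Ehrhart matrix polynomial `L²(nP)` is
`[[−1/12, −1/8],[−1/8, −23/12]]`, which is negative definite. -/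
theorem ehrhart_matrix_coefficient_can_be_negative_definite
    (P : Set (Fin 2 → ℝ))
    (hP : P = convexHull ℝ {coeR ![0, 1], coeR ![-1, -7], coeR ![1, -4]})
    (L : ℕ → Finset (Fin 2 → ℤ))
    (hL : ∀ n x, x ∈ L n ↔ coeR x ∈ (fun p => (n : ℝ) • p) '' P)
    (c : ℕ → Matrix (Fin 2) (Fin 2) ℝ)
    (hc : ∀ n, (∑ x ∈ L n, msq (coeR x)) =
      ∑ i ∈ Finset.range 5, ((n : ℝ) ^ i) • c i) :
    c 2 = !![-1/12, -1/8; -1/8, -23/12] ∧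
    ∀ x : Fin 2 → ℝ, x ≠ 0 → x ⬝ᵥ (c 2).mulVec x < 0 := by
  have key : ∀ (n : ℕ) (i j : Fin 2), (∑ x ∈ L n, msq (coeR x)) i j =
      c 0 i j + (n:ℝ) * c 1 i j + (n:ℝ)^2 * c 2 i j + (n:ℝ)^3 * c 3 i j + (n:ℝ)^4 * c 4 i j := by
    intro n i j
    rw [hc n]
    simp [Finset.sum_range_succ, Matrix.sum_apply, Matrix.smul_apply]
    try ring
  have S0 : (∑ x ∈ L 0, msq (coeR x)) = !![(0:ℝ), 0; 0, 0] := by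
    rw [sum_eq P hP L hL 0,
      show (∑ p ∈ T 0, p.1*p.1) = (0:ℤ) by decide,
      show (∑ p ∈ T 0, p.1*p.2) = (0:ℤ) by decide,
      show (∑ p ∈ T 0, p.2*p.2) = (0:ℤ) by decide]
    norm_num
  have S1 : (∑ x ∈ L 1, msq (coeR x)) = !![(2:ℝ), 3; 3, 121] := by
    rw [sum_eq P hP L hL 1,
      show (∑ p ∈ T 1, p.1*p.1) = (2:ℤ) by decide,
      show (∑ p ∈ T 1, p.1*p.2) = (3:ℤ) by decide,
      show (∑ p ∈ T 1, p.2*p.2) = (121:ℤ) by decide]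
    norm_num
  have S2 : (∑ x ∈ L 2, msq (coeR x)) = !![(22:ℝ), 33; 33, 1646] := by
    rw [sum_eq P hP L hL 2,
      show (∑ p ∈ T 2, p.1*p.1) = (22:ℤ) by decide,
      show (∑ p ∈ T 2, p.1*p.2) = (33:ℤ) by decide,
      show (∑ p ∈ T 2, p.2*p.2) = (1646:ℤ) by decide]
    norm_num
  have S3 : (∑ x ∈ L 3, msq (coeR x)) = !![(102:ℝ), 153; 153, 7961] := by
    rw [sum_eq P hP L hL 3,
      show (∑ p ∈ T 3, p.1*p.1) = (102:ℤ) by decide,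
      show (∑ p ∈ T 3, p.1*p.2) = (153:ℤ) by decide,
      show (∑ p ∈ T 3, p.2*p.2) = (7961:ℤ) by decide]
    norm_num
  have S4 : (∑ x ∈ L 4, msq (coeR x)) = !![(310:ℝ), 465; 465, 24610] := by
    rw [sum_eq P hP L hL 4,
      show (∑ p ∈ T 4, p.1*p.1) = (310:ℤ) by decide,
      show (∑ p ∈ T 4, p.1*p.2) = (465:ℤ) by decide,
      show (∑ p ∈ T 4, p.2*p.2) = (24610:ℤ) by decide]
    norm_num
  have hmain : c 2 = !![-1/12, -1/8; -1/8, -23/12] := by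
    ext i j
    have E0 := key 0 i j; rw [S0] at E0; norm_num at E0
    have E1 := key 1 i j; rw [S1] at E1; norm_num at E1
    have E2 := key 2 i j; rw [S2] at E2; norm_num at E2
    have E3 := key 3 i j; rw [S3] at E3; norm_num at E3
    have E4 := key 4 i j; rw [S4] at E4; norm_num at E4
    fin_cases i <;> fin_cases j <;> simp at E0 E1 E2 E3 E4 ⊢ <;> linarith
  refine ⟨hmain, ?_⟩
  intro x hx
  rw [hmain]
  have hxor : x 0 ≠ 0 ∨ x 1 ≠ 0 := by
    by_contra h
    push_neg at h
    exact hx (funext fun i => by fin_cases i <;> simp [h.1, h.2])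
  simp [Matrix.mulVec, dotProduct, Fin.sum_univ_two]
  rcases hxor with h | h
  · nlinarith [sq_nonneg (x 0 + 3/2 * x 1), sq_nonneg (x 1), sq_nonneg (x 0),
      mul_self_pos.mpr h]
  · nlinarith [sq_nonneg (x 0 + 3/2 * x 1), sq_nonneg (x 0), mul_self_pos.mpr h]
end

section
/- Let P be a lattice polygon and v a lattice point in the interior of P. Then either (i) v = (v₁+v₂)/2 for two distinct lattice points v₁, v₂ ∈ P, or (ii) v = (v₁+v₂+v₃)/3 for three pairwise distinct lattice points v₁, v₂, v₃ ∈ P. -/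
open Finset

/-- twice signed area determinant -/
def sd (p q x : Fin 2 → ℤ) : ℤ :=
  (p 0 - x 0) * (q 1 - x 1) - (p 1 - x 1) * (q 0 - x 0)

def mem3 (a b c x : Fin 2 → ℤ) : Prop :=
  0 ≤ sd b c x ∧ 0 ≤ sd c a x ∧ 0 ≤ sd a b x

lemma sd_cyc (p q x : Fin 2 → ℤ) : sd p q x = sd q x p := by unfold sd; ring

lemma sd_self_left (p q : Fin 2 → ℤ) : sd p q p = 0 := by unfold sd; ring

lemma sd_self_mid (p q : Fin 2 → ℤ) : sd p p q = 0 := by unfold sd; ring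

lemma sd_self_right (p q : Fin 2 → ℤ) : sd p q q = 0 := by unfold sd; ring

lemma sd_sum (a b c x : Fin 2 → ℤ) :
    sd b c x + sd c a x + sd a b x = sd b c a := by unfold sd; ring

lemma cram (a b c x : Fin 2 → ℤ) (i : Fin 2) :
    sd b c a * x i = sd b c x * a i + sd c a x * b i + sd a b x * c i := by
  fin_cases i <;> simp only [Fin.zero_eta, Fin.mk_one] <;> (unfold sd; ring)

lemma mem3_cyc {a b c x : Fin 2 → ℤ} (h : mem3 a b c x) : mem3 b c a x :=
  ⟨h.2.1, h.2.2, h.1⟩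

lemma mem3_self_left {a b c : Fin 2 → ℤ} (hD : 0 ≤ sd b c a) : mem3 a b c a :=
  ⟨hD, by rw [sd_self_right], by rw [sd_self_left]⟩

/-- affine evaluation of `sd q r ·` on a combination -/
lemma sd_affine {q r x y z w : Fin 2 → ℤ} {E s t u : ℤ}
    (h0 : E * x 0 = s * y 0 + t * z 0 + u * w 0)
    (h1 : E * x 1 = s * y 1 + t * z 1 + u * w 1)
    (hsum : s + t + u = E) :
    E * sd q r x = s * sd q r y + t * sd q r z + u * sd q r w := by
  unfold sd
  linear_combination (q 1 - r 1) * h0 + (r 0 - q 0) * h1 +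
    (q 1 * r 0 - q 0 * r 1) * hsum

lemma mem3_of_combo {a b c x : Fin 2 → ℤ} {E s t u : ℤ}
    (hE : 0 < E) (hD : 0 ≤ sd b c a)
    (hs : 0 ≤ s) (ht : 0 ≤ t) (hu : 0 ≤ u) (hsum : s + t + u = E)
    (h : ∀ i, E * x i = s * a i + t * b i + u * c i) :
    mem3 a b c x := by
  have e1 : E * sd b c x = s * sd b c a + t * sd b c b + u * sd b c c :=
    sd_affine (h 0) (h 1) hsum
  have e2 : E * sd c a x = s * sd c a a + t * sd c a b + u * sd c a c :=
    sd_affine (h 0) (h 1) hsum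
  have e3 : E * sd a b x = s * sd a b a + t * sd a b b + u * sd a b c :=
    sd_affine (h 0) (h 1) hsum
  rw [sd_self_left, sd_self_right] at e1
  rw [sd_self_right, sd_self_left] at e2
  rw [sd_self_left, sd_self_right] at e3
  have hba : sd c a b = sd b c a := by rw [sd_cyc b c a]
  have hca : sd a b c = sd b c a := by rw [sd_cyc a b c, sd_cyc b c a]
  rw [hba] at e2; rw [hca] at e3
  refine ⟨?_, ?_, ?_⟩ <;> nlinarith [mul_nonneg hs hD, mul_nonneg ht hD, mul_nonneg hu hD]

lemma mem3_sub {a b c p x : Fin 2 → ℤ}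
    (hD : 0 ≤ sd b c a) (hE : 0 < sd b c p)
    (hp : mem3 a b c p) (hx : mem3 p b c x) :
    mem3 a b c x := by
  obtain ⟨h1, h2, h3⟩ := hx
  obtain ⟨k1, k2, k3⟩ := hp
  have hsum := sd_sum p b c x
  have e1 : sd b c p * sd b c x = sd b c x * sd b c p + sd c p x * sd b c b
      + sd p b x * sd b c c := sd_affine (cram p b c x 0) (cram p b c x 1) hsum
  have e2 : sd b c p * sd c a x = sd b c x * sd c a p + sd c p x * sd c a b
      + sd p b x * sd c a c := sd_affine (cram p b c x 0) (cram p b c x 1) hsum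
  have e3 : sd b c p * sd a b x = sd b c x * sd a b p + sd c p x * sd a b b
      + sd p b x * sd a b c := sd_affine (cram p b c x 0) (cram p b c x 1) hsum
  rw [sd_self_left, sd_self_right] at e1
  rw [sd_self_left] at e2
  rw [sd_self_right] at e3
  have hba : sd c a b = sd b c a := by rw [sd_cyc b c a]
  have hca : sd a b c = sd b c a := by rw [sd_cyc a b c, sd_cyc b c a]
  rw [hba] at e2; rw [hca] at e3
  refine ⟨?_, ?_, ?_⟩ <;>
    nlinarith [mul_nonneg h1 k1, mul_nonneg h1 k2, mul_nonneg h1 k3,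
      mul_nonneg h2 hD, mul_nonneg h3 hD]

lemma not_mem3_far {a b c p : Fin 2 → ℤ} (h : sd b c p < sd b c a) :
    ¬ mem3 p b c a := by
  intro ⟨h1, h2, h3⟩
  have := sd_sum p b c a
  linarith

/-- if `p` is in the triangle and `p ≠ a` then its first barycentric coord is `< D`. -/
lemma sd_lt_of_ne {a b c p : Fin 2 → ℤ}
    (hD : 0 < sd b c a) (hp : mem3 a b c p) (hpa : p ≠ a) :
    sd b c p < sd b c a := by
  obtain ⟨h1, h2, h3⟩ := hp
  have hsum := sd_sum a b c p
  rcases lt_or_ge (sd b c p) (sd b c a) with h | h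
  · exact h
  · exfalso
    have h2' : sd c a p = 0 := by linarith
    have h3' : sd a b p = 0 := by linarith
    apply hpa
    funext i
    have := cram a b c p i
    rw [h2', h3'] at this
    have hEq : sd b c p = sd b c a := by linarith
    rw [hEq] at this
    have := mul_left_cancel₀ (ne_of_gt hD) (by linarith : sd b c a * p i = sd b c a * a i)
    exact this

lemma ne_vertices {a b c : Fin 2 → ℤ} (hD : 0 < sd b c a) :
    a ≠ b ∧ b ≠ c ∧ a ≠ c := by
  refine ⟨?_, ?_, ?_⟩ <;> rintro rfl
  · rw [sd_self_left] at hD; exact lt_irrefl _ hD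
  · rw [sd_self_mid] at hD; exact lt_irrefl _ hD
  · rw [sd_self_right] at hD; exact lt_irrefl _ hD

section extra

/-- In a lattice triangle of (twice-)area `≥ 2`, there is a lattice point
distinct from the three vertices. -/
lemma extra_point {a b c : Fin 2 → ℤ} (hD : 2 ≤ sd b c a) :
    ∃ p, mem3 a b c p ∧ p ≠ a ∧ p ≠ b ∧ p ≠ c := by
  set D := sd b c a with hDdef
  have hDpos : 0 < D := by linarith
  set u : Fin 2 → ℤ := b - a with hu
  set w : Fin 2 → ℤ := c - a with hw
  have hu0 : u 0 = b 0 - a 0 := rfl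
  have hu1 : u 1 = b 1 - a 1 := rfl
  have hw0 : w 0 = c 0 - a 0 := rfl
  have hw1 : w 1 = c 1 - a 1 := rfl
  have hdet : u 0 * w 1 - u 1 * w 0 = D := by
    rw [hu0, hu1, hw0, hw1, hDdef]; unfold sd; ring
  -- general facts about a candidate x
  have key : ∀ x : Fin 2 → ℤ,
      0 ≤ x 0 * w 1 - x 1 * w 0 → 0 ≤ u 0 * x 1 - u 1 * x 0 →
      (x 0 * w 1 - x 1 * w 0) + (u 0 * x 1 - u 1 * x 0) ≤ D →
      ¬ (x 0 * w 1 - x 1 * w 0 = 0 ∧ u 0 * x 1 - u 1 * x 0 = 0) →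
      ¬ (x 0 * w 1 - x 1 * w 0 = D ∧ u 0 * x 1 - u 1 * x 0 = 0) →
      ¬ (x 0 * w 1 - x 1 * w 0 = 0 ∧ u 0 * x 1 - u 1 * x 0 = D) →
      ∃ p, mem3 a b c p ∧ p ≠ a ∧ p ≠ b ∧ p ≠ c := by
    intro x hA hB hAB hne0 hneu hnew
    set A : ℤ := x 0 * w 1 - x 1 * w 0 with hAdef
    set B : ℤ := u 0 * x 1 - u 1 * x 0 with hBdef
    refine ⟨a + x, ⟨?_, ?_, ?_⟩, ?_, ?_, ?_⟩
    · have : sd b c (a + x) = D - A - B := by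
        rw [hAdef, hBdef, hu0, hu1, hw0, hw1, hDdef]
        show sd b c (a + x) = _
        unfold sd; simp only [Pi.add_apply]; ring
      rw [this]; linarith
    · have : sd c a (a + x) = A := by
        rw [hAdef, hw0, hw1]; unfold sd; simp only [Pi.add_apply]; ring
      rw [this]; exact hA
    · have : sd a b (a + x) = B := by
        rw [hBdef, hu0, hu1]; unfold sd; simp only [Pi.add_apply]; ring
      rw [this]; exact hB
    · intro hcontra
      apply hne0
      have hx0 : x 0 = 0 := by
        have := congrFun hcontra 0; simp at this; linarith [this]
      have hx1 : x 1 = 0 := by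
        have := congrFun hcontra 1; simp at this; linarith [this]
      exact ⟨by rw [hAdef, hx0, hx1]; ring, by rw [hBdef, hx0, hx1]; ring⟩
    · intro hcontra
      apply hneu
      have hx0 : x 0 = u 0 := by
        have := congrFun hcontra 0
        simp only [Pi.add_apply] at this
        rw [hu0]; linarith [this]
      have hx1 : x 1 = u 1 := by
        have := congrFun hcontra 1
        simp only [Pi.add_apply] at this
        rw [hu1]; linarith [this]
      exact ⟨by rw [hAdef, hx0, hx1]; exact hdet, by rw [hBdef, hx0, hx1]; ring⟩
    · intro hcontra
      apply hnew
      have hx0 : x 0 = w 0 := by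
        have := congrFun hcontra 0
        simp only [Pi.add_apply] at this
        rw [hw0]; linarith [this]
      have hx1 : x 1 = w 1 := by
        have := congrFun hcontra 1
        simp only [Pi.add_apply] at this
        rw [hw1]; linarith [this]
      exact ⟨by rw [hAdef, hx0, hx1]; ring, by rw [hBdef, hx0, hx1]; exact hdet⟩
  -- now construct a suitable x
  set g : ℤ := (Int.gcd (u 0) (u 1) : ℤ) with hg
  have hgnn : 0 ≤ g := Int.natCast_nonneg _
  rcases lt_trichotomy g 1 with hg0 | hg1 | hg2
  · -- g = 0 : u = 0, contradiction
    exfalso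
    have hz : g = 0 := by omega
    have hnat : (u 0).gcd (u 1) = 0 := by exact_mod_cast hg ▸ hz
    obtain ⟨h0', h1'⟩ := Int.gcd_eq_zero_iff.mp hnat
    rw [h0', h1'] at hdet
    simp at hdet
    omega
  · -- g = 1 : u is primitive, use Bezout
    have hgcd1 : Int.gcd (u 0) (u 1) = 1 := by
      have : (Int.gcd (u 0) (u 1) : ℤ) = 1 := by rw [← hg]; exact hg1
      exact_mod_cast this
    have hbez : u 0 * Int.gcdA (u 0) (u 1) + u 1 * Int.gcdB (u 0) (u 1) = 1 := by
      have := Int.gcd_eq_gcd_ab (u 0) (u 1)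
      rw [hgcd1] at this
      exact_mod_cast this.symm
    set z0 : ℤ := -Int.gcdB (u 0) (u 1) with hz0
    set z1 : ℤ := Int.gcdA (u 0) (u 1) with hz1
    have hz : u 0 * z1 - u 1 * z0 = 1 := by rw [hz0, hz1]; linarith [hbez]
    set σ : ℤ := w 0 * z1 - w 1 * z0 with hσ
    set A0 : ℤ := (-σ) % D with hA0
    have hA0nn : 0 ≤ A0 := Int.emod_nonneg _ (by omega)
    have hA0lt : A0 < D := Int.emod_lt_of_pos _ (by omega)
    set k : ℤ := -((-σ) / D) with hk
    have hkD : k * D = A0 + σ := by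
      have hde := Int.mul_ediv_add_emod (-σ) D
      linear_combination D * hk - hde - hA0
    refine key (fun i => if i = 0 then z0 + k * u 0 else z1 + k * u 1) ?_ ?_ ?_ ?_ ?_ ?_
    all_goals simp only [show ((0:Fin 2) = 0) = True from by simp, if_true,
      show ((1:Fin 2) = 0) = False from by simp, if_false, reduceIte]
    · -- A = A0 ≥ 0
      have : (z0 + k * u 0) * w 1 - (z1 + k * u 1) * w 0 = A0 := by
        have : z0 * w 1 - z1 * w 0 = -σ := by rw [hσ]; ring
        calc (z0 + k * u 0) * w 1 - (z1 + k * u 1) * w 0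
            = (z0 * w 1 - z1 * w 0) + k * (u 0 * w 1 - u 1 * w 0) := by ring
          _ = -σ + k * D := by rw [this, hdet]
          _ = A0 := by linarith [hkD]
      rw [this]; exact hA0nn
    · -- B = 1 ≥ 0
      have : u 0 * (z1 + k * u 1) - u 1 * (z0 + k * u 0) = 1 := by
        calc u 0 * (z1 + k * u 1) - u 1 * (z0 + k * u 0)
            = (u 0 * z1 - u 1 * z0) := by ring
          _ = 1 := hz
      rw [this]; omega
    · have e1 : (z0 + k * u 0) * w 1 - (z1 + k * u 1) * w 0 = A0 := by
        have h2 : z0 * w 1 - z1 * w 0 = -σ := by rw [hσ]; ring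
        calc (z0 + k * u 0) * w 1 - (z1 + k * u 1) * w 0
            = (z0 * w 1 - z1 * w 0) + k * (u 0 * w 1 - u 1 * w 0) := by ring
          _ = -σ + k * D := by rw [h2, hdet]
          _ = A0 := by linarith [hkD]
      have e2 : u 0 * (z1 + k * u 1) - u 1 * (z0 + k * u 0) = 1 := by
        calc u 0 * (z1 + k * u 1) - u 1 * (z0 + k * u 0)
            = (u 0 * z1 - u 1 * z0) := by ring
          _ = 1 := hz
      rw [e1, e2]; omega
    · intro ⟨hA', hB'⟩
      have e2 : u 0 * (z1 + k * u 1) - u 1 * (z0 + k * u 0) = 1 := by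
        calc u 0 * (z1 + k * u 1) - u 1 * (z0 + k * u 0)
            = (u 0 * z1 - u 1 * z0) := by ring
          _ = 1 := hz
      omega
    · intro ⟨hA', hB'⟩
      have e2 : u 0 * (z1 + k * u 1) - u 1 * (z0 + k * u 0) = 1 := by
        calc u 0 * (z1 + k * u 1) - u 1 * (z0 + k * u 0)
            = (u 0 * z1 - u 1 * z0) := by ring
          _ = 1 := hz
      omega
    · intro ⟨hA', hB'⟩
      have e2 : u 0 * (z1 + k * u 1) - u 1 * (z0 + k * u 0) = 1 := by
        calc u 0 * (z1 + k * u 1) - u 1 * (z0 + k * u 0)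
            = (u 0 * z1 - u 1 * z0) := by ring
          _ = 1 := hz
      omega
  · -- g ≥ 2 : use u / g, a point on the edge ab
    have hdvd0 : g ∣ u 0 := Int.gcd_dvd_left _ _
    have hdvd1 : g ∣ u 1 := Int.gcd_dvd_right _ _
    set x0 : ℤ := u 0 / g with hx0
    set x1 : ℤ := u 1 / g with hx1
    have hgx0 : g * x0 = u 0 := Int.mul_ediv_cancel' hdvd0
    have hgx1 : g * x1 = u 1 := Int.mul_ediv_cancel' hdvd1
    have hgA : g * (x0 * w 1 - x1 * w 0) = D := by
      calc g * (x0 * w 1 - x1 * w 0) = (g * x0) * w 1 - (g * x1) * w 0 := by ring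
        _ = u 0 * w 1 - u 1 * w 0 := by rw [hgx0, hgx1]
        _ = D := hdet
    have hgB : u 0 * x1 - u 1 * x0 = 0 := by
      calc u 0 * x1 - u 1 * x0 = (g * x0) * x1 - (g * x1) * x0 := by rw [hgx0, hgx1]
        _ = 0 := by ring
    have hApos : 0 < x0 * w 1 - x1 * w 0 := by nlinarith
    refine key (fun i => if i = 0 then x0 else x1) ?_ ?_ ?_ ?_ ?_ ?_
    all_goals simp only [show ((0:Fin 2) = 0) = True from by simp, if_true,
      show ((1:Fin 2) = 0) = False from by simp, if_false, reduceIte]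
    · linarith
    · rw [hgB]
    · rw [hgB]; nlinarith
    · intro ⟨hA', hB'⟩; omega
    · intro ⟨hA', hB'⟩; nlinarith
    · intro ⟨hA', hB'⟩; omega

end extra

section lset

open Classical in
noncomputable def LSet (a b c : Fin 2 → ℤ) : Finset (Fin 2 → ℤ) :=
  (Finset.Icc (fun i => min (a i) (min (b i) (c i)))
      (fun i => max (a i) (max (b i) (c i)))).filter (fun x => mem3 a b c x)

lemma mem3_bounds {a b c x : Fin 2 → ℤ} (hD : 0 < sd b c a) (hx : mem3 a b c x) (i : Fin 2) :
    min (a i) (min (b i) (c i)) ≤ x i ∧ x i ≤ max (a i) (max (b i) (c i)) := by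
  obtain ⟨h1, h2, h3⟩ := hx
  have hc := cram a b c x i
  have hs := sd_sum a b c x
  constructor
  · set m := min (a i) (min (b i) (c i)) with hm
    have ha' : m ≤ a i := min_le_left _ _
    have hb' : m ≤ b i := le_trans (min_le_right _ _) (min_le_left _ _)
    have hc' : m ≤ c i := le_trans (min_le_right _ _) (min_le_right _ _)
    have hDm : sd b c a * m = sd b c x * m + sd c a x * m + sd a b x * m := by
      rw [← hs]; ring
    have key : sd b c a * m ≤ sd b c a * x i := by
      rw [hDm, hc]
      have e1 := mul_le_mul_of_nonneg_left ha' h1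
      have e2 := mul_le_mul_of_nonneg_left hb' h2
      have e3 := mul_le_mul_of_nonneg_left hc' h3
      linarith
    exact le_of_mul_le_mul_left key hD
  · set M := max (a i) (max (b i) (c i)) with hM
    have ha' : a i ≤ M := le_max_left _ _
    have hb' : b i ≤ M := le_trans (le_max_left _ _) (le_max_right _ _)
    have hc' : c i ≤ M := le_trans (le_max_right _ _) (le_max_right _ _)
    have hDM : sd b c a * M = sd b c x * M + sd c a x * M + sd a b x * M := by
      rw [← hs]; ring
    have key : sd b c a * x i ≤ sd b c a * M := by
      rw [hDM, hc]
      have e1 := mul_le_mul_of_nonneg_left ha' h1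
      have e2 := mul_le_mul_of_nonneg_left hb' h2
      have e3 := mul_le_mul_of_nonneg_left hc' h3
      linarith
    exact le_of_mul_le_mul_left key hD

lemma mem_LSet {a b c x : Fin 2 → ℤ} (hD : 0 < sd b c a) :
    x ∈ LSet a b c ↔ mem3 a b c x := by
  classical
  unfold LSet
  rw [Finset.mem_filter, Finset.mem_Icc]
  constructor
  · exact fun h => by simpa using h.2
  · intro h
    refine ⟨⟨fun i => (mem3_bounds hD h i).1, fun i => (mem3_bounds hD h i).2⟩, by simpa using h⟩

end lset

section split

lemma sd_swap (p q x : Fin 2 → ℤ) : sd p q x = -sd q p x := by unfold sd; ring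

lemma eq_vertexA {a b c p : Fin 2 → ℤ} (hD : 0 < sd b c a)
    (h2 : sd c a p = 0) (h3 : sd a b p = 0) : p = a := by
  have hs := sd_sum a b c p
  rw [h2, h3] at hs
  funext i
  have hc := cram a b c p i
  rw [h2, h3] at hc
  simp only [zero_mul, add_zero] at hc
  have : sd b c a * p i = sd b c a * a i := by rw [← hs] at hc ⊢; linarith
  exact mul_left_cancel₀ (ne_of_gt hD) this

lemma eq_vertexB {a b c p : Fin 2 → ℤ} (hD : 0 < sd b c a)
    (h1 : sd b c p = 0) (h3 : sd a b p = 0) : p = b := by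
  have hs := sd_sum a b c p
  rw [h1, h3] at hs
  funext i
  have hc := cram a b c p i
  rw [h1, h3] at hc
  simp only [zero_mul, add_zero, zero_add] at hc
  have : sd b c a * p i = sd b c a * b i := by
    rw [hc]
    have h' : sd c a p = sd b c a := by linarith
    rw [h']
  exact mul_left_cancel₀ (ne_of_gt hD) this

lemma eq_vertexC {a b c p : Fin 2 → ℤ} (hD : 0 < sd b c a)
    (h1 : sd b c p = 0) (h2 : sd c a p = 0) : p = c := by
  have hs := sd_sum a b c p
  rw [h1, h2] at hs
  funext i
  have hc := cram a b c p i
  rw [h1, h2] at hc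
  simp only [zero_mul, add_zero, zero_add] at hc
  have : sd b c a * p i = sd b c a * c i := by
    rw [hc]
    have h' : sd a b p = sd b c a := by linarith
    rw [h']
  exact mul_left_cancel₀ (ne_of_gt hD) this

lemma id_bary {a b c p v : Fin 2 → ℤ} :
    sd a b v * sd c p v - sd c a v * sd p b v + sd b c v * sd a p v = 0 := by
  unfold sd; ring

lemma id_u1 {a b c p v : Fin 2 → ℤ} :
    sd b c a * sd c p v = sd b c p * sd c a v - sd c a p * sd b c v := by
  unfold sd; ring

lemma id_u2 {a b c p v : Fin 2 → ℤ} :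
    sd b c a * sd p b v = sd b c p * sd a b v - sd a b p * sd b c v := by
  unfold sd; ring

lemma id_u3 {a b c p v : Fin 2 → ℤ} :
    sd b c a * sd a p v = sd c a p * sd a b v - sd a b p * sd c a v := by
  unfold sd; ring

lemma split {a b c p v : Fin 2 → ℤ} (hD : 0 < sd b c a)
    (hv : mem3 a b c v) (hp : mem3 a b c p)
    (hpa : p ≠ a) (hpb : p ≠ b) (hpc : p ≠ c) :
    (0 < sd b c p ∧ mem3 p b c v) ∨ (0 < sd p c a ∧ mem3 a p c v) ∨
      (0 < sd b p a ∧ mem3 a b p v) := by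
  obtain ⟨hα, hβ, hγ⟩ := hp
  obtain ⟨hαv, hβv, hγv⟩ := hv
  have hsum := sd_sum a b c p
  have hsumv := sd_sum a b c v
  have horient2 : sd p c a = sd c a p := by rw [sd_cyc p c a]
  have horient3 : sd b p a = sd a b p := by rw [sd_cyc b p a, sd_cyc p a b]
  have hswap1 : sd p c v = -sd c p v := by rw [sd_swap]
  have hswap2 : sd b p v = -sd p b v := by rw [sd_swap]
  have hswap3 : sd p a v = -sd a p v := by rw [sd_swap]
  have hid1 := @id_bary a b c p v
  have hid2 := @id_u1 a b c p v
  have hid3 := @id_u2 a b c p v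
  have hid4 := @id_u3 a b c p v
  by_cases hα0 : sd b c p = 0
  · -- p on the edge bc
    have hβpos : 0 < sd c a p := by
      rcases lt_or_eq_of_le hβ with h | h
      · exact h
      · exact absurd (eq_vertexC hD hα0 h.symm) hpc
    have hγpos : 0 < sd a b p := by
      rcases lt_or_eq_of_le hγ with h | h
      · exact h
      · exact absurd (eq_vertexB hD hα0 h.symm) hpb
    have hu1 : sd c p v ≤ 0 := by
      have h' : sd b c a * sd c p v ≤ sd b c a * 0 := by
        rw [mul_zero, hid2, hα0]
        nlinarith [mul_nonneg hβ hαv]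
      exact le_of_mul_le_mul_left h' hD
    have hu2 : sd p b v ≤ 0 := by
      have h' : sd b c a * sd p b v ≤ sd b c a * 0 := by
        rw [mul_zero, hid3, hα0]
        nlinarith [mul_nonneg hγ hαv]
      exact le_of_mul_le_mul_left h' hD
    by_cases hu3 : 0 ≤ sd a p v
    · exact Or.inr (Or.inl ⟨by rw [horient2]; exact hβpos,
        ⟨by rw [hswap1]; linarith, hβv, hu3⟩⟩)
    · exact Or.inr (Or.inr ⟨by rw [horient3]; exact hγpos,
        ⟨by rw [hswap2]; linarith, by rw [hswap3]; linarith, hγv⟩⟩)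
  · have hαpos : 0 < sd b c p := lt_of_le_of_ne hα (Ne.symm hα0)
    by_cases hβ0 : sd c a p = 0
    · have hγpos : 0 < sd a b p := by
        rcases lt_or_eq_of_le hγ with h | h
        · exact h
        · exact absurd (eq_vertexA hD hβ0 h.symm) hpa
      have hu1 : 0 ≤ sd c p v := by
        have h' : sd b c a * 0 ≤ sd b c a * sd c p v := by
          rw [mul_zero, hid2, hβ0]
          nlinarith [mul_nonneg hα hβv]
        exact le_of_mul_le_mul_left h' hD
      have hu3 : sd a p v ≤ 0 := by
        have h' : sd b c a * sd a p v ≤ sd b c a * 0 := by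
          rw [mul_zero, hid4, hβ0]
          nlinarith [mul_nonneg hγ hβv]
        exact le_of_mul_le_mul_left h' hD
      by_cases hu2 : 0 ≤ sd p b v
      · exact Or.inl ⟨hαpos, hαv, hu1, hu2⟩
      · exact Or.inr (Or.inr ⟨by rw [horient3]; exact hγpos,
          ⟨by rw [hswap2]; linarith, by rw [hswap3]; linarith, hγv⟩⟩)
    · have hβpos : 0 < sd c a p := lt_of_le_of_ne hβ (Ne.symm hβ0)
      by_cases hγ0 : sd a b p = 0
      · have hu2 : 0 ≤ sd p b v := by
          have h' : sd b c a * 0 ≤ sd b c a * sd p b v := by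
            rw [mul_zero, hid3, hγ0]
            nlinarith [mul_nonneg hα hγv]
          exact le_of_mul_le_mul_left h' hD
        have hu3 : 0 ≤ sd a p v := by
          have h' : sd b c a * 0 ≤ sd b c a * sd a p v := by
            rw [mul_zero, hid4, hγ0]
            nlinarith [mul_nonneg hβ hγv]
          exact le_of_mul_le_mul_left h' hD
        by_cases hu1 : 0 ≤ sd c p v
        · exact Or.inl ⟨hαpos, hαv, hu1, hu2⟩
        · exact Or.inr (Or.inl ⟨by rw [horient2]; exact hβpos,
            ⟨by rw [hswap1]; linarith, hβv, hu3⟩⟩)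
      · have hγpos : 0 < sd a b p := lt_of_le_of_ne hγ (Ne.symm hγ0)
        by_cases hu1 : 0 ≤ sd c p v
        · by_cases hu2 : 0 ≤ sd p b v
          · exact Or.inl ⟨hαpos, hαv, hu1, hu2⟩
          · by_cases hu3 : sd a p v ≤ 0
            · exact Or.inr (Or.inr ⟨by rw [horient3]; exact hγpos,
                ⟨by rw [hswap2]; linarith, by rw [hswap3]; linarith, hγv⟩⟩)
            · -- u1 ≥ 0, u2 < 0, u3 > 0 : forces u1 = 0
              push_neg at hu2 hu3
              have hz1 : 0 ≤ sd a b v * sd c p v := mul_nonneg hγv hu1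
              have hz2 : sd c a v * sd p b v ≤ 0 :=
                mul_nonpos_of_nonneg_of_nonpos hβv hu2.le
              have hz3 : 0 ≤ sd b c v * sd a p v := mul_nonneg hαv hu3.le
              have he2 : sd c a v * sd p b v = 0 := by linarith
              have he3 : sd b c v * sd a p v = 0 := by linarith
              have hbv0 : sd c a v = 0 := by
                rcases mul_eq_zero.mp he2 with h | h
                · exact h
                · exact absurd h (ne_of_lt hu2)
              have hav0 : sd b c v = 0 := by
                rcases mul_eq_zero.mp he3 with h | h
                · exact h
                · exact absurd h (ne_of_gt hu3)
              have hu1z : sd c p v = 0 := by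
                have h0 : sd b c a * sd c p v = 0 := by
                  rw [hid2, hbv0, hav0]; ring
                rcases mul_eq_zero.mp h0 with h | h
                · exact absurd h (ne_of_gt hD)
                · exact h
              exact Or.inr (Or.inl ⟨by rw [horient2]; exact hβpos,
                ⟨by rw [hswap1]; linarith, hβv, hu3.le⟩⟩)
        · push_neg at hu1
          by_cases hu3 : 0 ≤ sd a p v
          · exact Or.inr (Or.inl ⟨by rw [horient2]; exact hβpos,
              ⟨by rw [hswap1]; linarith, hβv, hu3⟩⟩)
          · push_neg at hu3
            by_cases hu2 : sd p b v ≤ 0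
            · exact Or.inr (Or.inr ⟨by rw [horient3]; exact hγpos,
                ⟨by rw [hswap2]; linarith, by rw [hswap3]; linarith, hγv⟩⟩)
            · push_neg at hu2
              exfalso
              have hz1 : sd a b v * sd c p v ≤ 0 :=
                mul_nonpos_of_nonneg_of_nonpos hγv hu1.le
              have hz2 : 0 ≤ sd c a v * sd p b v := mul_nonneg hβv hu2.le
              have hz3 : sd b c v * sd a p v ≤ 0 :=
                mul_nonpos_of_nonneg_of_nonpos hαv hu3.le
              have he1 : sd a b v * sd c p v = 0 := by linarith
              have he2 : sd c a v * sd p b v = 0 := by linarith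
              have he3 : sd b c v * sd a p v = 0 := by linarith
              have h1' : sd a b v = 0 := by
                rcases mul_eq_zero.mp he1 with h | h
                · exact h
                · exact absurd h (ne_of_lt hu1)
              have h2' : sd c a v = 0 := by
                rcases mul_eq_zero.mp he2 with h | h
                · exact h
                · exact absurd h (ne_of_gt hu2)
              have h3' : sd b c v = 0 := by
                rcases mul_eq_zero.mp he3 with h | h
                · exact h
                · exact absurd h (ne_of_lt hu3)
              rw [h1', h2', h3'] at hsumv
              linarith

end split

section segmid

/-- If `v` lies on the (relatively open) edge `bc` of an oriented triangle `abc`,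
then `v ± w` lie in the triangle for some nonzero lattice vector `w`. -/
lemma seg_mid {a b c v : Fin 2 → ℤ} (hD : 0 < sd b c a) (hv : mem3 a b c v)
    (hα0 : sd b c v = 0) (hvb : v ≠ b) (hvc : v ≠ c) :
    ∃ w : Fin 2 → ℤ, w ≠ 0 ∧ mem3 a b c (v + w) ∧ mem3 a b c (v - w) := by
  obtain ⟨_, hβ, hγ⟩ := hv
  have hsum := sd_sum a b c v
  rw [hα0] at hsum
  simp only [zero_add] at hsum
  have hcr : ∀ i, sd b c a * v i = sd c a v * b i + sd a b v * c i := by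
    intro i
    have := cram a b c v i
    rw [hα0] at this
    simpa using this
  -- β > 0 and γ > 0
  have hβpos : 0 < sd c a v := by
    rcases lt_or_eq_of_le hβ with h | h
    · exact h
    · exact absurd (eq_vertexC hD hα0 h.symm) hvc
  have hγpos : 0 < sd a b v := by
    rcases lt_or_eq_of_le hγ with h | h
    · exact h
    · exact absurd (eq_vertexB hD hα0 h.symm) hvb
  set D := sd b c a with hDdef
  set β := sd c a v with hβdef
  set γ := sd a b v with hγdef
  -- direction d = c - b, primitive vector w
  set d : Fin 2 → ℤ := c - b with hd
  have hd0 : d 0 = c 0 - b 0 := rfl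
  have hd1 : d 1 = c 1 - b 1 := rfl
  have hdne : ¬(d 0 = 0 ∧ d 1 = 0) := by
    rintro ⟨h0, h1⟩
    have hbc : b = c := by
      funext i
      fin_cases i
      · show b 0 = c 0; omega
      · show b 1 = c 1; omega
    obtain ⟨_, h2, _⟩ := ne_vertices hD
    exact h2 hbc
  set g : ℤ := (Int.gcd (d 0) (d 1) : ℤ) with hg
  have hgpos : 0 < g := by
    rcases (lt_or_eq_of_le (Int.natCast_nonneg (Int.gcd (d 0) (d 1)))) with h | h
    · rw [hg]; exact h
    · exfalso
      apply hdne
      exact Int.gcd_eq_zero_iff.mp (by exact_mod_cast h.symm)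
  have hdvd0 : g ∣ d 0 := Int.gcd_dvd_left _ _
  have hdvd1 : g ∣ d 1 := Int.gcd_dvd_right _ _
  set w : Fin 2 → ℤ := fun i => d i / g with hw
  have hgw : ∀ i, g * w i = d i := by
    intro i
    fin_cases i
    · exact Int.mul_ediv_cancel' hdvd0
    · exact Int.mul_ediv_cancel' hdvd1
  have hwne : ¬(w 0 = 0 ∧ w 1 = 0) := by
    rintro ⟨h0, h1⟩
    apply hdne
    constructor
    · rw [← hgw 0, h0, mul_zero]
    · rw [← hgw 1, h1, mul_zero]
  -- D * (v - b) = γ * d  (coordinatewise)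
  have hβγ : β = D - γ := by omega
  have hvb' : ∀ i, D * (v i - b i) = γ * d i := by
    intro i
    fin_cases i
    · have h := hcr 0
      rw [hβγ] at h
      show D * (v 0 - b 0) = γ * d 0
      rw [hd0]; linarith
    · have h := hcr 1
      rw [hβγ] at h
      show D * (v 1 - b 1) = γ * d 1
      rw [hd1]; linarith
  -- det (v - b , w) = 0
  have hdet0 : (v 0 - b 0) * w 1 - (v 1 - b 1) * w 0 = 0 := by
    have h1 : D * ((v 0 - b 0) * (g * w 1) - (v 1 - b 1) * (g * w 0)) = 0 := by
      rw [hgw 0, hgw 1]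
      calc D * ((v 0 - b 0) * d 1 - (v 1 - b 1) * d 0)
          = (D * (v 0 - b 0)) * d 1 - (D * (v 1 - b 1)) * d 0 := by ring
        _ = (γ * d 0) * d 1 - (γ * d 1) * d 0 := by rw [hvb' 0, hvb' 1]
        _ = 0 := by ring
    have h2 : D * g * ((v 0 - b 0) * w 1 - (v 1 - b 1) * w 0) = 0 := by
      rw [← h1]; ring
    have hDg : D * g ≠ 0 := by positivity
    exact (mul_eq_zero.mp h2).resolve_left hDg
  -- gcd of w is 1, Bezout coefficient m
  have hwgcd : Int.gcd (w 0) (w 1) = 1 := by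
    have hgz := hgpos
    rw [hg] at hgz
    have hgn : 0 < Int.gcd (d 0) (d 1) := by exact_mod_cast hgz
    have := Int.gcd_div_gcd_div_gcd hgn
    rw [hw]
    simpa using this
  have hbez : w 0 * Int.gcdA (w 0) (w 1) + w 1 * Int.gcdB (w 0) (w 1) = 1 := by
    have := Int.gcd_eq_gcd_ab (w 0) (w 1)
    rw [hwgcd] at this
    exact_mod_cast this.symm
  set m : ℤ := (v 0 - b 0) * Int.gcdA (w 0) (w 1) + (v 1 - b 1) * Int.gcdB (w 0) (w 1) with hm
  have hvm : ∀ i, v i - b i = m * w i := by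
    intro i
    fin_cases i
    · show v 0 - b 0 = m * w 0
      rw [hm]
      linear_combination (-(v 0 - b 0)) * hbez + (Int.gcdB (w 0) (w 1)) * hdet0
    · show v 1 - b 1 = m * w 1
      rw [hm]
      linear_combination (-(v 1 - b 1)) * hbez - (Int.gcdA (w 0) (w 1)) * hdet0
  -- D * m = γ * g
  have hDm : D * m = γ * g := by
    rcases (not_and_or.mp hwne) with h | h
    · have h0 := hvb' 0
      rw [← hgw 0] at h0
      have hv0 : v 0 - b 0 = m * w 0 := hvm 0
      have : D * (m * w 0) = γ * (g * w 0) := by rw [← hv0]; exact h0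
      have : (D * m - γ * g) * w 0 = 0 := by linarith [this]
      exact sub_eq_zero.mp ((mul_eq_zero.mp this).resolve_right h)
    · have h1 := hvb' 1
      rw [← hgw 1] at h1
      have hv1 : v 1 - b 1 = m * w 1 := hvm 1
      have : D * (m * w 1) = γ * (g * w 1) := by rw [← hv1]; exact h1
      have : (D * m - γ * g) * w 1 = 0 := by linarith [this]
      exact sub_eq_zero.mp ((mul_eq_zero.mp this).resolve_right h)
  -- bounds 0 < m < g
  have hγD : γ < D := by omega
  have hmpos : 0 < m := by nlinarith
  have hmlt : m < g := by nlinarith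
  -- membership of b + k • w for 0 ≤ k ≤ g
  have hmem : ∀ k : ℤ, 0 ≤ k → k ≤ g → mem3 a b c (fun i => b i + k * w i) := by
    intro k hk0 hkg
    refine mem3_of_combo (E := g) (s := 0) (t := g - k) (u := k) hgpos (le_of_lt hD)
      (le_refl 0) (by omega) hk0 (by ring) ?_
    intro i
    have hdi : d i = c i - b i := rfl
    linear_combination k * hgw i + k * hdi
  have hmem1 : mem3 a b c (fun i => b i + (m + 1) * w i) := hmem (m + 1) (by omega) (by omega)
  have hmem2 : mem3 a b c (fun i => b i + (m - 1) * w i) := hmem (m - 1) (by omega) (by omega)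
  refine ⟨w, ?_, ?_, ?_⟩
  · intro hw0
    apply hwne
    constructor
    · rw [hw0]; rfl
    · rw [hw0]; rfl
  · have : v + w = fun i => b i + (m + 1) * w i := by
      funext i
      have := hvm i
      simp only [Pi.add_apply]
      linarith [hvm i]
    rw [this]; exact hmem1
  · have : v - w = fun i => b i + (m - 1) * w i := by
      funext i
      have := hvm i
      simp only [Pi.sub_apply]
      linarith [hvm i]
    rw [this]; exact hmem2

end segmid

section descent

lemma mem3_self_b {a b c : Fin 2 → ℤ} (hD : 0 ≤ sd b c a) : mem3 a b c b := by
  refine ⟨le_of_eq (sd_self_left b c).symm, ?_, le_of_eq (sd_self_right a b).symm⟩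
  rw [sd_cyc c a b, sd_cyc a b c]; exact hD

lemma mem3_self_c {a b c : Fin 2 → ℤ} (hD : 0 ≤ sd b c a) : mem3 a b c c := by
  refine ⟨le_of_eq (sd_self_right b c).symm, le_of_eq (sd_self_left c a).symm, ?_⟩
  rw [sd_cyc a b c]; exact hD

def goal3 (a b c v : Fin 2 → ℤ) : Prop :=
  (∃ w, w ≠ 0 ∧ mem3 a b c (v + w) ∧ mem3 a b c (v - w)) ∨
  (∃ p q r, mem3 a b c p ∧ mem3 a b c q ∧ mem3 a b c r ∧ p ≠ q ∧ p ≠ r ∧ q ≠ r ∧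
    ∀ i, p i + q i + r i = 3 * v i)

lemma goal3_mono {a b c a' b' c' v : Fin 2 → ℤ}
    (h : ∀ x, mem3 a' b' c' x → mem3 a b c x) :
    goal3 a' b' c' v → goal3 a b c v := by
  rintro (⟨w, hw, h1, h2⟩ | ⟨p, q, r, h1, h2, h3, h4, h5, h6, h7⟩)
  · exact Or.inl ⟨w, hw, h _ h1, h _ h2⟩
  · exact Or.inr ⟨p, q, r, h _ h1, h _ h2, h _ h3, h4, h5, h6, h7⟩

lemma descent : ∀ N : ℕ, ∀ a b c v : Fin 2 → ℤ, (LSet a b c).card ≤ N →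
    0 < sd b c a → mem3 a b c v → v ≠ a → v ≠ b → v ≠ c → goal3 a b c v := by
  intro N
  induction N with
  | zero =>
    intro a b c v hcard hD hv _ _ _
    exfalso
    have : v ∈ LSet a b c := (mem_LSet hD).mpr hv
    have := Finset.card_pos.mpr ⟨v, this⟩
    omega
  | succ n ih =>
    intro a b c v hcard hD hv hva hvb hvc
    have hDbca : 0 < sd c a b := by rw [sd_cyc c a b, sd_cyc a b c]; exact hD
    have hDcab : 0 < sd a b c := by rw [sd_cyc a b c]; exact hD
    by_cases hex : ∃ p, mem3 a b c p ∧ p ≠ a ∧ p ≠ b ∧ p ≠ c ∧ p ≠ v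
    · obtain ⟨p, hp, hpa, hpb, hpc, hpv⟩ := hex
      rcases split hD hv hp hpa hpb hpc with ⟨hor, hmem⟩ | ⟨hor, hmem⟩ | ⟨hor, hmem⟩
      · -- triangle (p, b, c), excluded vertex a
        have hsub : ∀ x, mem3 p b c x → mem3 a b c x :=
          fun x hx => mem3_sub hD.le hor hp hx
        have hss : LSet p b c ⊆ LSet a b c := by
          intro x hx
          exact (mem_LSet hD).mpr (hsub x ((mem_LSet hor).mp hx))
        have hain : a ∈ LSet a b c := (mem_LSet hD).mpr (mem3_self_left hD.le)
        have hanot : a ∉ LSet p b c := by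
          intro hmem'
          exact not_mem3_far (sd_lt_of_ne hD hp hpa) ((mem_LSet hor).mp hmem')
        have hlt : (LSet p b c).card < (LSet a b c).card :=
          Finset.card_lt_card ⟨hss, fun h' => hanot (h' hain)⟩
        have := ih p b c v (by omega) hor hmem (Ne.symm hpv) hvb hvc
        exact goal3_mono hsub this
      · -- triangle (p, c, a) (cyclic form of (a,p,c)), excluded vertex b
        have hor' : 0 < sd c a p := by rw [← sd_cyc p c a]; exact hor
        have hpcyc : mem3 b c a p := mem3_cyc hp
        have hsub : ∀ x, mem3 p c a x → mem3 a b c x := by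
          intro x hx
          have : mem3 b c a x := mem3_sub hDbca.le hor' hpcyc hx
          exact mem3_cyc (mem3_cyc this)
        have hss : LSet p c a ⊆ LSet a b c := by
          intro x hx
          exact (mem_LSet hD).mpr (hsub x ((mem_LSet hor').mp hx))
        have hbin : b ∈ LSet a b c := (mem_LSet hD).mpr (mem3_self_b hD.le)
        have hbnot : b ∉ LSet p c a := by
          intro hmem'
          exact not_mem3_far (sd_lt_of_ne hDbca hpcyc hpb) ((mem_LSet hor').mp hmem')
        have hlt : (LSet p c a).card < (LSet a b c).card :=
          Finset.card_lt_card ⟨hss, fun h' => hbnot (h' hbin)⟩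
        have hmem' : mem3 p c a v := mem3_cyc hmem
        have := ih p c a v (by omega) hor' hmem' (Ne.symm hpv) hvc hva
        exact goal3_mono hsub this
      · -- triangle (p, a, b) (cyclic form of (a,b,p)), excluded vertex c
        have hor' : 0 < sd a b p := by rw [← sd_cyc p a b, ← sd_cyc b p a]; exact hor
        have hpcyc : mem3 c a b p := mem3_cyc (mem3_cyc hp)
        have hsub : ∀ x, mem3 p a b x → mem3 a b c x := by
          intro x hx
          have : mem3 c a b x := mem3_sub hDcab.le hor' hpcyc hx
          exact mem3_cyc this
        have hss : LSet p a b ⊆ LSet a b c := by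
          intro x hx
          exact (mem_LSet hD).mpr (hsub x ((mem_LSet hor').mp hx))
        have hcin : c ∈ LSet a b c := (mem_LSet hD).mpr (mem3_self_c hD.le)
        have hcnot : c ∉ LSet p a b := by
          intro hmem'
          exact not_mem3_far (sd_lt_of_ne hDcab hpcyc hpc) ((mem_LSet hor').mp hmem')
        have hlt : (LSet p a b).card < (LSet a b c).card :=
          Finset.card_lt_card ⟨hss, fun h' => hcnot (h' hcin)⟩
        have hmem' : mem3 p a b v := mem3_cyc (mem3_cyc hmem)
        have := ih p a b v (by omega) hor' hmem' (Ne.symm hpv) hva hvb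
        exact goal3_mono hsub this
    · -- no extra lattice point : {a, b, c, v} are the only lattice points
      push_neg at hex
      have honly : ∀ q, mem3 a b c q → q ≠ a → q ≠ b → q ≠ c → q = v := hex
      obtain ⟨hαv, hβv, hγv⟩ := hv
      have hvcyc : mem3 b c a v := mem3_cyc ⟨hαv, hβv, hγv⟩
      have hvcyc2 : mem3 c a b v := mem3_cyc hvcyc
      -- each barycentric coordinate of v is ≤ 1
      have hα1 : sd b c v ≤ 1 := by
        by_contra h
        push_neg at h
        obtain ⟨q, hq, hqv, hqb, hqc⟩ := extra_point (a := v) (b := b) (c := c) (by omega)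
        have hqbig : mem3 a b c q := mem3_sub hD.le (by omega) ⟨hαv, hβv, hγv⟩ hq
        have hqa : q = a := by
          by_contra hqa
          exact hqv (honly q hqbig hqa hqb hqc)
        rw [hqa] at hq
        exact not_mem3_far (sd_lt_of_ne hD ⟨hαv, hβv, hγv⟩ hva) hq
      have hβ1 : sd c a v ≤ 1 := by
        by_contra h
        push_neg at h
        obtain ⟨q, hq, hqv, hqc, hqa⟩ := extra_point (a := v) (b := c) (c := a) (by omega)
        have hqbig : mem3 b c a q := mem3_sub hDbca.le (by omega) hvcyc hq
        have hqb : q = b := by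
          by_contra hqb
          exact hqv (honly q (mem3_cyc (mem3_cyc hqbig)) hqa hqb hqc)
        rw [hqb] at hq
        exact not_mem3_far (sd_lt_of_ne hDbca hvcyc hvb) hq
      have hγ1 : sd a b v ≤ 1 := by
        by_contra h
        push_neg at h
        obtain ⟨q, hq, hqv, hqa, hqb⟩ := extra_point (a := v) (b := a) (c := b) (by omega)
        have hqbig : mem3 c a b q := mem3_sub hDcab.le (by omega) hvcyc2 hq
        have hqc : q = c := by
          by_contra hqc
          exact hqv (honly q (mem3_cyc hqbig) hqa hqb hqc)
        rw [hqc] at hq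
        exact not_mem3_far (sd_lt_of_ne hDcab hvcyc2 hvc) hq
      by_cases hz1 : sd b c v = 0
      · obtain ⟨w, hw, h1, h2⟩ := seg_mid hD ⟨hαv, hβv, hγv⟩ hz1 hvb hvc
        exact Or.inl ⟨w, hw, h1, h2⟩
      · by_cases hz2 : sd c a v = 0
        · obtain ⟨w, hw, h1, h2⟩ := seg_mid hDbca hvcyc hz2 hvc hva
          exact Or.inl ⟨w, hw, mem3_cyc (mem3_cyc h1), mem3_cyc (mem3_cyc h2)⟩
        · by_cases hz3 : sd a b v = 0
          · obtain ⟨w, hw, h1, h2⟩ := seg_mid hDcab hvcyc2 hz3 hva hvb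
            exact Or.inl ⟨w, hw, mem3_cyc h1, mem3_cyc h2⟩
          · -- all coordinates are 1, v is the centroid
            have e1 : sd b c v = 1 := by omega
            have e2 : sd c a v = 1 := by omega
            have e3 : sd a b v = 1 := by omega
            have hD3 : sd b c a = 3 := by
              have := sd_sum a b c v
              omega
            obtain ⟨hne1, hne2, hne3⟩ := ne_vertices hD
            refine Or.inr ⟨a, b, c, mem3_self_left hD.le, mem3_self_b hD.le,
              mem3_self_c hD.le, hne1, hne3, hne2, ?_⟩
            intro i
            have := cram a b c v i
            rw [e1, e2, e3, hD3] at this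
            linarith

end descent

section realbridge


lemma coeR_inj : Function.Injective coeR := by
  intro x y h
  funext i
  have := congrFun h i
  simp only [coeR] at this
  exact_mod_cast this

lemma hull3 {A B C X : Fin 2 → ℝ} (h : X ∈ convexHull ℝ {A, B, C}) :
    ∃ w1 w2 w3 : ℝ, 0 ≤ w1 ∧ 0 ≤ w2 ∧ 0 ≤ w3 ∧ w1 + w2 + w3 = 1 ∧
      ∀ i, X i = w1 * A i + w2 * B i + w3 * C i := by
  rw [convexHull_insert ⟨B, by simp⟩, mem_convexJoin] at h
  obtain ⟨A', hA', z, hz, hXz⟩ := h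
  rw [Set.mem_singleton_iff] at hA'
  subst hA'
  rw [convexHull_pair] at hz
  obtain ⟨t1, t2, ht1, ht2, hts, hz⟩ := hz
  obtain ⟨s1, s2, hs1, hs2, hss, hX⟩ := hXz
  refine ⟨s1, s2 * t1, s2 * t2, hs1, mul_nonneg hs2 ht1, mul_nonneg hs2 ht2, by nlinarith, ?_⟩
  intro i
  have h1 := congrFun hX i
  have h2 := congrFun hz i
  simp only [Pi.add_apply, Pi.smul_apply, smul_eq_mul] at h1 h2
  rw [← h1, ← h2]
  ring

lemma cast_sd_eq {a b c v : Fin 2 → ℤ} {w1 w2 w3 : ℝ} {q r : Fin 2 → ℤ}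
    (hs : w1 + w2 + w3 = 1)
    (h : ∀ i, ((v i : ℤ) : ℝ) = w1 * a i + w2 * b i + w3 * c i) :
    ((sd q r v : ℤ) : ℝ) = w1 * sd q r a + w2 * sd q r b + w3 * sd q r c := by
  unfold sd
  push_cast
  linear_combination ((q 1 : ℝ) - (r 1)) * h 0 + ((r 0 : ℝ) - (q 0)) * h 1 +
    ((q 1 : ℝ) * (r 0) - (q 0) * (r 1)) * hs

lemma mem3_of_weights {a b c v : Fin 2 → ℤ} {w1 w2 w3 : ℝ} (hD : 0 ≤ sd b c a)
    (h1 : 0 ≤ w1) (h2 : 0 ≤ w2) (h3 : 0 ≤ w3) (hs : w1 + w2 + w3 = 1)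
    (h : ∀ i, ((v i : ℤ) : ℝ) = w1 * a i + w2 * b i + w3 * c i) :
    mem3 a b c v := by
  have hDr : (0 : ℝ) ≤ ((sd b c a : ℤ) : ℝ) := by exact_mod_cast hD
  have hba : sd c a b = sd b c a := by rw [sd_cyc b c a]
  have hca : sd a b c = sd b c a := by rw [sd_cyc a b c, sd_cyc b c a]
  refine ⟨?_, ?_, ?_⟩
  · have e := cast_sd_eq (q := b) (r := c) hs h
    rw [sd_self_left, sd_self_right] at e
    have : (0:ℝ) ≤ ((sd b c v : ℤ) : ℝ) := by
      rw [e]; push_cast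
      nlinarith [mul_nonneg h1 hDr]
    exact_mod_cast this
  · have e := cast_sd_eq (q := c) (r := a) hs h
    rw [sd_self_right, sd_self_left, hba] at e
    have : (0:ℝ) ≤ ((sd c a v : ℤ) : ℝ) := by
      rw [e]; push_cast
      nlinarith [mul_nonneg h2 hDr]
    exact_mod_cast this
  · have e := cast_sd_eq (q := a) (r := b) hs h
    rw [sd_self_left, sd_self_right, hca] at e
    have : (0:ℝ) ≤ ((sd a b v : ℤ) : ℝ) := by
      rw [e]; push_cast
      nlinarith [mul_nonneg h3 hDr]
    exact_mod_cast this

lemma mem3_hull {a b c x : Fin 2 → ℤ} (hD : 0 < sd b c a) (hx : mem3 a b c x) :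
    coeR x ∈ convexHull ℝ ({coeR a, coeR b, coeR c} : Set (Fin 2 → ℝ)) := by
  obtain ⟨h1, h2, h3⟩ := hx
  have hsum := sd_sum a b c x
  set wts : Fin 3 → ℝ := ![(sd b c x : ℝ), (sd c a x : ℝ), (sd a b x : ℝ)] with hwts
  set pts : Fin 3 → (Fin 2 → ℝ) := ![coeR a, coeR b, coeR c] with hpts
  have hsumw : ∑ i : Fin 3, wts i = (sd b c a : ℝ) := by
    rw [hwts]
    simp only [Fin.sum_univ_three, Matrix.cons_val_zero, Matrix.cons_val_one,
      Matrix.head_cons, Matrix.cons_val_two, Matrix.tail_cons]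
    exact_mod_cast hsum
  have hpos : 0 < ∑ i : Fin 3, wts i := by
    rw [hsumw]; exact_mod_cast hD
  have hwnn : ∀ i ∈ Finset.univ, 0 ≤ wts i := by
    intro i _
    fin_cases i
    · show (0:ℝ) ≤ wts 0
      rw [hwts]; show (0:ℝ) ≤ ((sd b c x : ℤ) : ℝ); exact_mod_cast h1
    · show (0:ℝ) ≤ wts 1
      rw [hwts]; show (0:ℝ) ≤ ((sd c a x : ℤ) : ℝ); exact_mod_cast h2
    · show (0:ℝ) ≤ wts 2
      rw [hwts]; show (0:ℝ) ≤ ((sd a b x : ℤ) : ℝ); exact_mod_cast h3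
  have hmem := Finset.centerMass_mem_convexHull (t := Finset.univ) (w := wts) (z := pts)
    (s := ({coeR a, coeR b, coeR c} : Set (Fin 2 → ℝ))) hwnn hpos
    (fun i _ => by fin_cases i <;> simp [hpts])
  have hcm : Finset.univ.centerMass wts pts = coeR x := by
    rw [Finset.centerMass, hsumw]
    rw [inv_smul_eq_iff₀ (by exact_mod_cast ne_of_gt hD)]
    funext i
    have hcast : ((sd b c a * x i : ℤ) : ℝ)
        = ((sd b c x * a i + sd c a x * b i + sd a b x * c i : ℤ) : ℝ) :=
      congrArg _ (cram a b c x i)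
    push_cast at hcast
    simp only [hwts, hpts, Fin.sum_univ_three, Finset.sum_apply, Pi.add_apply,
      Pi.smul_apply, smul_eq_mul, Matrix.cons_val_zero, Matrix.cons_val_one,
      Matrix.head_cons, Matrix.cons_val_two, Matrix.tail_cons, coeR]
    linarith [hcast]
  rwa [hcm] at hmem

end realbridge

section segr

/-- If a lattice point `v` lies strictly inside the segment `[b, c]` (as a real segment),
then `v ± w` stay in the segment for some nonzero lattice `w`. -/
lemma segR {b c v : Fin 2 → ℤ} (hseg : coeR v ∈ segment ℝ (coeR b) (coeR c))
    (hvb : v ≠ b) (hvc : v ≠ c) :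
    ∃ w : Fin 2 → ℤ, w ≠ 0 ∧ coeR (v + w) ∈ segment ℝ (coeR b) (coeR c) ∧
      coeR (v - w) ∈ segment ℝ (coeR b) (coeR c) := by
  have hbc : b ≠ c := by
    rintro rfl
    rw [segment_same] at hseg
    exact hvb (coeR_inj hseg)
  obtain ⟨t1, t2, ht1, ht2, hts, hv⟩ := hseg
  have hvco : ∀ i, (v i : ℝ) = t1 * b i + t2 * c i := by
    intro i
    have := congrFun hv i
    simp only [Pi.add_apply, Pi.smul_apply, smul_eq_mul, coeR] at this
    linarith [this]
  set d : Fin 2 → ℤ := c - b with hd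
  have hdi : ∀ i, d i = c i - b i := fun i => rfl
  have hdne : ¬(d 0 = 0 ∧ d 1 = 0) := by
    rintro ⟨h0, h1⟩
    apply hbc
    funext i
    have h' := hdi i
    have hz : d i = 0 := by
      fin_cases i
      · exact h0
      · exact h1
    omega
  set g : ℤ := (Int.gcd (d 0) (d 1) : ℤ) with hg
  have hgnn : 0 ≤ g := Int.natCast_nonneg _
  have hgpos : 0 < g := by
    rcases lt_or_eq_of_le hgnn with h | h
    · exact h
    · exfalso
      apply hdne
      rw [hg] at h
      exact Int.gcd_eq_zero_iff.mp (by exact_mod_cast h.symm)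
  have hdvd0 : g ∣ d 0 := Int.gcd_dvd_left _ _
  have hdvd1 : g ∣ d 1 := Int.gcd_dvd_right _ _
  set w : Fin 2 → ℤ := fun i => d i / g with hw
  have hgw : ∀ i, g * w i = d i := by
    intro i
    fin_cases i
    · exact Int.mul_ediv_cancel' hdvd0
    · exact Int.mul_ediv_cancel' hdvd1
  have hwne : ¬(w 0 = 0 ∧ w 1 = 0) := by
    rintro ⟨h0, h1⟩
    apply hdne
    constructor
    · rw [← hgw 0, h0, mul_zero]
    · rw [← hgw 1, h1, mul_zero]
  -- real: v - b = t2 • d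
  have hvr : ∀ i, (v i : ℝ) - b i = t2 * d i := by
    intro i
    have := hvco i
    have hdir : ((d i : ℤ) : ℝ) = (c i : ℝ) - b i := by
      rw [hdi i]; push_cast; ring
    rw [hdir]
    have ht1' : t1 = 1 - t2 := by linarith
    rw [ht1'] at this
    linarith [this]
  -- integer determinant vanishes
  have hdet0 : (v 0 - b 0) * w 1 - (v 1 - b 1) * w 0 = 0 := by
    have hreal : ((v 0 - b 0) * d 1 - (v 1 - b 1) * d 0 : ℤ) = (0 : ℤ) := by
      have hr : (((v 0 - b 0) * d 1 - (v 1 - b 1) * d 0 : ℤ) : ℝ) = 0 := by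
        push_cast
        have h0 := hvr 0
        have h1 := hvr 1
        linear_combination ((d 1 : ℤ) : ℝ) * h0 - ((d 0 : ℤ) : ℝ) * h1
      exact_mod_cast hr
    have h2 : g * ((v 0 - b 0) * w 1 - (v 1 - b 1) * w 0) = 0 := by
      calc g * ((v 0 - b 0) * w 1 - (v 1 - b 1) * w 0)
          = (v 0 - b 0) * (g * w 1) - (v 1 - b 1) * (g * w 0) := by ring
        _ = (v 0 - b 0) * d 1 - (v 1 - b 1) * d 0 := by rw [hgw 0, hgw 1]
        _ = 0 := hreal
    exact (mul_eq_zero.mp h2).resolve_left (by omega)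
  have hwgcd : Int.gcd (w 0) (w 1) = 1 := by
    have hgz := hgpos
    rw [hg] at hgz
    have hgn : 0 < Int.gcd (d 0) (d 1) := by exact_mod_cast hgz
    have := Int.gcd_div_gcd_div_gcd hgn
    rw [hw]
    simpa using this
  have hbez : w 0 * Int.gcdA (w 0) (w 1) + w 1 * Int.gcdB (w 0) (w 1) = 1 := by
    have := Int.gcd_eq_gcd_ab (w 0) (w 1)
    rw [hwgcd] at this
    exact_mod_cast this.symm
  set m : ℤ := (v 0 - b 0) * Int.gcdA (w 0) (w 1) + (v 1 - b 1) * Int.gcdB (w 0) (w 1) with hm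
  have hvm : ∀ i, v i - b i = m * w i := by
    intro i
    fin_cases i
    · show v 0 - b 0 = m * w 0
      rw [hm]
      linear_combination (-(v 0 - b 0)) * hbez + (Int.gcdB (w 0) (w 1)) * hdet0
    · show v 1 - b 1 = m * w 1
      rw [hm]
      linear_combination (-(v 1 - b 1)) * hbez - (Int.gcdA (w 0) (w 1)) * hdet0
  -- m = t2 * g  (real)
  have hmreal : (m : ℝ) = t2 * g := by
    have hkey : ∀ i, ((m : ℝ) - t2 * g) * w i = 0 := by
      intro i
      have h1 : ((v i - b i : ℤ) : ℝ) = (m : ℝ) * w i := by exact_mod_cast hvm i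
      have h2 : ((v i : ℝ) - b i) = t2 * d i := hvr i
      have h3 : ((d i : ℤ) : ℝ) = (g : ℝ) * w i := by exact_mod_cast (hgw i).symm
      push_cast at h1
      nlinarith [h1, h2, h3]
    rcases not_and_or.mp hwne with h | h
    · have := hkey 0
      have hwr : ((w 0 : ℤ) : ℝ) ≠ 0 := by exact_mod_cast h
      have := (mul_eq_zero.mp this).resolve_right hwr
      linarith
    · have := hkey 1
      have hwr : ((w 1 : ℤ) : ℝ) ≠ 0 := by exact_mod_cast h
      have := (mul_eq_zero.mp this).resolve_right hwr
      linarith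
  -- bounds
  have hm0 : 0 ≤ m := by
    have : (0 : ℝ) ≤ (m : ℝ) := by
      rw [hmreal]
      positivity
    exact_mod_cast this
  have hmg : m ≤ g := by
    have : (m : ℝ) ≤ (g : ℝ) := by
      rw [hmreal]
      nlinarith [ht2, hts, ht1, (by exact_mod_cast hgpos : (0:ℝ) < (g:ℝ))]
    exact_mod_cast this
  have hmne0 : m ≠ 0 := by
    intro h0
    apply hvb
    funext i
    have := hvm i
    rw [h0, zero_mul] at this
    omega
  have hmneg : m ≠ g := by
    intro h0
    apply hvc
    funext i
    have h1 := hvm i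
    rw [h0] at h1
    have h2 := hgw i
    have h3 := hdi i
    omega
  -- membership of b + k w in the segment for 0 ≤ k ≤ g
  have hmemseg : ∀ k : ℤ, 0 ≤ k → k ≤ g →
      coeR (fun i => b i + k * w i) ∈ segment ℝ (coeR b) (coeR c) := by
    intro k hk0 hkg
    refine ⟨1 - (k : ℝ) / g, (k : ℝ) / g, ?_, ?_, by ring, ?_⟩
    · have : (k : ℝ) / g ≤ 1 := by
        rw [div_le_one (by exact_mod_cast hgpos)]
        exact_mod_cast hkg
      linarith
    · positivity
    · funext i
      simp only [Pi.add_apply, Pi.smul_apply, smul_eq_mul, coeR]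
      have hgr : (g : ℝ) ≠ 0 := by exact_mod_cast ne_of_gt hgpos
      have h3 : ((d i : ℤ) : ℝ) = (g : ℝ) * w i := by exact_mod_cast (hgw i).symm
      have h4 : ((d i : ℤ) : ℝ) = (c i : ℝ) - b i := by rw [hdi i]; push_cast; ring
      push_cast
      have h5 : ((w i : ℤ) : ℝ) = (((c i : ℤ) : ℝ) - ((b i : ℤ) : ℝ)) / (g : ℝ) := by
        rw [eq_div_iff hgr]
        linarith [h3, h4]
      rw [h5]
      field_simp
      ring
  refine ⟨w, ?_, ?_, ?_⟩
  · intro h0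
    apply hwne
    rw [h0]
    exact ⟨rfl, rfl⟩
  · have heq : v + w = fun i => b i + (m + 1) * w i := by
      funext i
      have := hvm i
      simp only [Pi.add_apply]
      linarith [hvm i]
    rw [heq]
    exact hmemseg (m + 1) (by omega) (by omega)
  · have heq : v - w = fun i => b i + (m - 1) * w i := by
      funext i
      have := hvm i
      simp only [Pi.sub_apply]
      linarith [hvm i]
    rw [heq]
    exact hmemseg (m - 1) (by omega) (by omega)

end segr

section collinr

lemma collinR {a b c v : Fin 2 → ℤ}
    (hv : coeR v ∈ convexHull ℝ ({coeR a, coeR b, coeR c} : Set (Fin 2 → ℝ)))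
    (hD : sd b c a = 0) (hva : v ≠ a) (hvb : v ≠ b) (hvc : v ≠ c) :
    ∃ x y : Fin 2 → ℤ,
      coeR x ∈ convexHull ℝ ({coeR a, coeR b, coeR c} : Set (Fin 2 → ℝ)) ∧
      coeR y ∈ convexHull ℝ ({coeR a, coeR b, coeR c} : Set (Fin 2 → ℝ)) ∧
      v ≠ x ∧ v ≠ y ∧ coeR v ∈ segment ℝ (coeR x) (coeR y) := by
  have hmema : coeR a ∈ convexHull ℝ ({coeR a, coeR b, coeR c} : Set (Fin 2 → ℝ)) :=
    subset_convexHull _ _ (by simp)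
  have hmemb : coeR b ∈ convexHull ℝ ({coeR a, coeR b, coeR c} : Set (Fin 2 → ℝ)) :=
    subset_convexHull _ _ (by simp)
  have hmemc : coeR c ∈ convexHull ℝ ({coeR a, coeR b, coeR c} : Set (Fin 2 → ℝ)) :=
    subset_convexHull _ _ (by simp)
  by_cases hab : a = b
  · subst hab
    have hset : ({coeR a, coeR a, coeR c} : Set (Fin 2 → ℝ)) = {coeR a, coeR c} :=
      Set.insert_idem _ _
    rw [hset, convexHull_pair] at hv
    exact ⟨a, c, hmema, hmemc, hva, hvc, hv⟩
  by_cases hac : a = c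
  · subst hac
    have hset : ({coeR a, coeR b, coeR a} : Set (Fin 2 → ℝ)) = {coeR a, coeR b} := by
      ext z; simp; tauto
    rw [hset, convexHull_pair] at hv
    exact ⟨a, b, hmema, hmemb, hva, hvb, hv⟩
  by_cases hbc : b = c
  · subst hbc
    have hset : ({coeR a, coeR b, coeR b} : Set (Fin 2 → ℝ)) = {coeR a, coeR b} := by
      ext z; simp
    rw [hset, convexHull_pair] at hv
    exact ⟨a, b, hmema, hmemb, hva, hvb, hv⟩
  -- all three distinct, genuinely collinear case
  obtain ⟨w1, w2, w3, hw1, hw2, hw3, hws, hvco⟩ := hull3 hv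
  simp only [coeR] at hvco
  set d : Fin 2 → ℤ := b - a with hd
  have hdi : ∀ i, d i = b i - a i := fun i => rfl
  have hdne : ¬(d 0 = 0 ∧ d 1 = 0) := by
    rintro ⟨h0, h1⟩
    apply hab
    funext i
    have h' := hdi i
    have hz : d i = 0 := by
      fin_cases i
      · exact h0
      · exact h1
    omega
  set g : ℤ := (Int.gcd (d 0) (d 1) : ℤ) with hg
  have hgnn : 0 ≤ g := Int.natCast_nonneg _
  have hgpos : 0 < g := by
    rcases lt_or_eq_of_le hgnn with h | h
    · exact h
    · exfalso
      apply hdne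
      rw [hg] at h
      exact Int.gcd_eq_zero_iff.mp (by exact_mod_cast h.symm)
  have hdvd0 : g ∣ d 0 := Int.gcd_dvd_left _ _
  have hdvd1 : g ∣ d 1 := Int.gcd_dvd_right _ _
  set w : Fin 2 → ℤ := fun i => d i / g with hw
  have hgw : ∀ i, g * w i = d i := by
    intro i
    fin_cases i
    · exact Int.mul_ediv_cancel' hdvd0
    · exact Int.mul_ediv_cancel' hdvd1
  have hwne : ¬(w 0 = 0 ∧ w 1 = 0) := by
    rintro ⟨h0, h1⟩
    apply hdne
    constructor
    · rw [← hgw 0, h0, mul_zero]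
    · rw [← hgw 1, h1, mul_zero]
  have hwgcd : Int.gcd (w 0) (w 1) = 1 := by
    have hgz := hgpos
    rw [hg] at hgz
    have hgn : 0 < Int.gcd (d 0) (d 1) := by exact_mod_cast hgz
    have := Int.gcd_div_gcd_div_gcd hgn
    rw [hw]
    simpa using this
  have hbez : w 0 * Int.gcdA (w 0) (w 1) + w 1 * Int.gcdB (w 0) (w 1) = 1 := by
    have := Int.gcd_eq_gcd_ab (w 0) (w 1)
    rw [hwgcd] at this
    exact_mod_cast this.symm
  -- b - a = g w
  have hbw : ∀ i, b i - a i = g * w i := fun i => by rw [hgw i, hdi i]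
  -- c - a = k w
  have hcdet : (c 0 - a 0) * w 1 - (c 1 - a 1) * w 0 = 0 := by
    have h2 : g * ((c 0 - a 0) * w 1 - (c 1 - a 1) * w 0) = 0 := by
      calc g * ((c 0 - a 0) * w 1 - (c 1 - a 1) * w 0)
          = (c 0 - a 0) * (g * w 1) - (c 1 - a 1) * (g * w 0) := by ring
        _ = (c 0 - a 0) * d 1 - (c 1 - a 1) * d 0 := by rw [hgw 0, hgw 1]
        _ = 0 := by
            rw [hdi 0, hdi 1]
            have : sd b c a = (b 0 - a 0) * (c 1 - a 1) - (b 1 - a 1) * (c 0 - a 0) := rfl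
            linarith [hD, this.symm.trans hD]
    exact (mul_eq_zero.mp h2).resolve_left (by omega)
  set k : ℤ := (c 0 - a 0) * Int.gcdA (w 0) (w 1) + (c 1 - a 1) * Int.gcdB (w 0) (w 1) with hk
  have hcw : ∀ i, c i - a i = k * w i := by
    intro i
    fin_cases i
    · show c 0 - a 0 = k * w 0
      rw [hk]
      linear_combination (-(c 0 - a 0)) * hbez + (Int.gcdB (w 0) (w 1)) * hcdet
    · show c 1 - a 1 = k * w 1
      rw [hk]
      linear_combination (-(c 1 - a 1)) * hbez - (Int.gcdA (w 0) (w 1)) * hcdet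
  -- real coefficient of v
  set τ : ℝ := w2 * g + w3 * k with hτ
  have hvreal : ∀ i, (v i : ℝ) - a i = τ * w i := by
    intro i
    have h1 := hvco i
    have h2 : ((b i - a i : ℤ) : ℝ) = (g : ℝ) * w i := by exact_mod_cast hbw i
    have h3 : ((c i - a i : ℤ) : ℝ) = (k : ℝ) * w i := by exact_mod_cast hcw i
    push_cast at h2 h3
    have hw1' : w1 = 1 - w2 - w3 := by linarith
    rw [hτ]
    rw [hw1'] at h1
    nlinarith [h1, h2, h3]
  -- integer dets for v
  have hvdet : (v 0 - a 0) * w 1 - (v 1 - a 1) * w 0 = 0 := by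
    have hr : (((v 0 - a 0) * w 1 - (v 1 - a 1) * w 0 : ℤ) : ℝ) = 0 := by
      push_cast
      have h0 := hvreal 0
      have h1 := hvreal 1
      linear_combination ((w 1 : ℤ) : ℝ) * h0 - ((w 0 : ℤ) : ℝ) * h1
    exact_mod_cast hr
  set μ : ℤ := (v 0 - a 0) * Int.gcdA (w 0) (w 1) + (v 1 - a 1) * Int.gcdB (w 0) (w 1) with hμ
  have hvw : ∀ i, v i - a i = μ * w i := by
    intro i
    fin_cases i
    · show v 0 - a 0 = μ * w 0
      rw [hμ]
      linear_combination (-(v 0 - a 0)) * hbez + (Int.gcdB (w 0) (w 1)) * hvdet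
    · show v 1 - a 1 = μ * w 1
      rw [hμ]
      linear_combination (-(v 1 - a 1)) * hbez - (Int.gcdA (w 0) (w 1)) * hvdet
  have hμreal : (μ : ℝ) = τ := by
    have hkey : ∀ i, ((μ : ℝ) - τ) * w i = 0 := by
      intro i
      have h1 : ((v i - a i : ℤ) : ℝ) = (μ : ℝ) * w i := by exact_mod_cast hvw i
      have h2 := hvreal i
      push_cast at h1
      nlinarith [h1, h2]
    rcases not_and_or.mp hwne with h | h
    · have h0 := hkey 0
      have hwr : ((w 0 : ℤ) : ℝ) ≠ 0 := by exact_mod_cast h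
      have := (mul_eq_zero.mp h0).resolve_right hwr
      linarith
    · have h0 := hkey 1
      have hwr : ((w 1 : ℤ) : ℝ) ≠ 0 := by exact_mod_cast h
      have := (mul_eq_zero.mp h0).resolve_right hwr
      linarith
  -- bounds
  set lo : ℤ := min 0 (min g k) with hlo
  set hi : ℤ := max 0 (max g k) with hhi
  have hlo0 : lo ≤ 0 := min_le_left _ _
  have hlog : lo ≤ g := le_trans (min_le_right _ _) (min_le_left _ _)
  have hlok : lo ≤ k := le_trans (min_le_right _ _) (min_le_right _ _)
  have hhi0 : (0:ℤ) ≤ hi := le_max_left _ _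
  have hhig : g ≤ hi := le_trans (le_max_left _ _) (le_max_right _ _)
  have hhik : k ≤ hi := le_trans (le_max_right _ _) (le_max_right _ _)
  have hμlo : lo ≤ μ := by
    have : (lo : ℝ) ≤ (μ : ℝ) := by
      rw [hμreal, hτ]
      have c1 : (lo : ℝ) ≤ 0 := by exact_mod_cast hlo0
      have c2 : (lo : ℝ) ≤ (g : ℝ) := by exact_mod_cast hlog
      have c3 : (lo : ℝ) ≤ (k : ℝ) := by exact_mod_cast hlok
      nlinarith [mul_le_mul_of_nonneg_left c2 hw2, mul_le_mul_of_nonneg_left c3 hw3,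
        mul_nonneg hw1 (neg_nonneg.mpr c1)]
    exact_mod_cast this
  have hμhi : μ ≤ hi := by
    have : (μ : ℝ) ≤ (hi : ℝ) := by
      rw [hμreal, hτ]
      have c1 : (0:ℝ) ≤ (hi : ℝ) := by exact_mod_cast hhi0
      have c2 : (g : ℝ) ≤ (hi : ℝ) := by exact_mod_cast hhig
      have c3 : (k : ℝ) ≤ (hi : ℝ) := by exact_mod_cast hhik
      nlinarith [mul_le_mul_of_nonneg_left c2 hw2, mul_le_mul_of_nonneg_left c3 hw3,
        mul_nonneg hw1 c1]
    exact_mod_cast this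
  -- v is none of a, b, c so μ avoids 0, g, k
  have hwnz : ∃ j, w j ≠ 0 := by
    rcases not_and_or.mp hwne with h | h
    · exact ⟨0, h⟩
    · exact ⟨1, h⟩
  have hμne0 : μ ≠ 0 := by
    intro h0
    apply hva
    funext i
    have := hvw i
    rw [h0, zero_mul] at this
    omega
  have hμneg : μ ≠ g := by
    intro h0
    apply hvb
    funext i
    have h1 := hvw i
    rw [h0] at h1
    have h2 := hbw i
    omega
  have hμnek : μ ≠ k := by
    intro h0
    apply hvc
    funext i
    have h1 := hvw i
    rw [h0] at h1
    have h2 := hcw i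
    omega
  have hloset : lo = 0 ∨ lo = g ∨ lo = k := by omega
  have hhiset : hi = 0 ∨ hi = g ∨ hi = k := by omega
  have hμlo' : lo < μ := lt_of_le_of_ne hμlo (by rcases hloset with h|h|h <;> rw [h] <;> omega)
  have hμhi' : μ < hi := lt_of_le_of_ne hμhi (by rcases hhiset with h|h|h <;> rw [h] <;> omega)
  -- attain endpoints
  have hattain : ∀ s : ℤ, s = 0 ∨ s = g ∨ s = k →
      ∃ x : Fin 2 → ℤ, coeR x ∈ convexHull ℝ ({coeR a, coeR b, coeR c} : Set (Fin 2 → ℝ)) ∧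
        ∀ i, x i - a i = s * w i := by
    rintro s (rfl | rfl | rfl)
    · exact ⟨a, hmema, fun i => by ring⟩
    · exact ⟨b, hmemb, fun i => hbw i⟩
    · exact ⟨c, hmemc, fun i => hcw i⟩
  obtain ⟨x, hxmem, hxco⟩ := hattain lo hloset
  obtain ⟨y, hymem, hyco⟩ := hattain hi hhiset
  have hvx : v ≠ x := by
    intro h0
    obtain ⟨j, hj⟩ := hwnz
    have h1 := hvw j
    have h2 := hxco j
    rw [h0] at h1
    have : (μ - lo) * w j = 0 := by linarith [h1, h2]
    rcases mul_eq_zero.mp this with h | h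
    · omega
    · exact hj h
  have hvy : v ≠ y := by
    intro h0
    obtain ⟨j, hj⟩ := hwnz
    have h1 := hvw j
    have h2 := hyco j
    rw [h0] at h1
    have : (μ - hi) * w j = 0 := by linarith [h1, h2]
    rcases mul_eq_zero.mp this with h | h
    · omega
    · exact hj h
  refine ⟨x, y, hxmem, hymem, hvx, hvy, ?_⟩
  -- segment membership
  have hΔ : (0:ℝ) < (hi : ℝ) - lo := by
    have : lo < hi := lt_trans hμlo' hμhi'
    have := sub_pos.mpr (show (lo:ℝ) < hi from by exact_mod_cast this)
    exact this
  refine ⟨1 - ((μ : ℝ) - lo) / ((hi : ℝ) - lo), ((μ : ℝ) - lo) / ((hi : ℝ) - lo), ?_, ?_, by ring, ?_⟩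
  · have hle : ((μ : ℝ) - lo) / ((hi : ℝ) - lo) ≤ 1 := by
      rw [div_le_one hΔ]
      have : (μ:ℝ) ≤ (hi:ℝ) := by exact_mod_cast hμhi
      linarith
    linarith
  · apply div_nonneg _ (le_of_lt hΔ)
    have : (lo:ℝ) ≤ (μ:ℝ) := by exact_mod_cast hμlo
    linarith
  · funext i
    simp only [Pi.add_apply, Pi.smul_apply, smul_eq_mul, coeR]
    have hx1 : (x i : ℝ) = (a i : ℝ) + (lo : ℝ) * w i := by
      have h2 : x i = a i + lo * w i := by linarith [hxco i]
      exact_mod_cast h2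
    have hy1 : (y i : ℝ) = (a i : ℝ) + (hi : ℝ) * w i := by
      have h2 : y i = a i + hi * w i := by linarith [hyco i]
      exact_mod_cast h2
    have hv1 : (v i : ℝ) = (a i : ℝ) + (μ : ℝ) * w i := by
      have h2 : v i = a i + μ * w i := by linarith [hvw i]
      exact_mod_cast h2
    rw [hx1, hy1, hv1]
    field_simp
    ring

end collinr

section mainhelpers

lemma ne_add_sub {v w : Fin 2 → ℤ} (hw : w ≠ 0) : v + w ≠ v - w := by
  intro h
  apply hw
  funext i
  have h2 := congrFun h i
  simp only [Pi.add_apply, Pi.sub_apply] at h2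
  simp only [Pi.zero_apply]
  omega

lemma mid_eq (v w : Fin 2 → ℤ) :
    coeR v = (2⁻¹ : ℝ) • (coeR (v + w) + coeR (v - w)) := by
  funext i
  simp only [coeR, Pi.smul_apply, Pi.add_apply, Pi.sub_apply, smul_eq_mul]
  push_cast
  ring

lemma main_seg {F : Finset (Fin 2 → ℝ)} {x y v : Fin 2 → ℤ}
    (hx : coeR x ∈ convexHull ℝ (↑F : Set (Fin 2 → ℝ)))
    (hy : coeR y ∈ convexHull ℝ (↑F : Set (Fin 2 → ℝ)))
    (hv : coeR v ∈ segment ℝ (coeR x) (coeR y)) (hvx : v ≠ x) (hvy : v ≠ y) :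
    (∃ v₁ v₂ : Fin 2 → ℤ, coeR v₁ ∈ convexHull ℝ (↑F : Set (Fin 2 → ℝ)) ∧
        coeR v₂ ∈ convexHull ℝ (↑F : Set (Fin 2 → ℝ)) ∧ v₁ ≠ v₂ ∧
        coeR v = (2⁻¹ : ℝ) • (coeR v₁ + coeR v₂)) := by
  obtain ⟨w, hw, h1, h2⟩ := segR hv hvx hvy
  have hsub : segment ℝ (coeR x) (coeR y) ⊆ convexHull ℝ (↑F : Set (Fin 2 → ℝ)) :=
    (convex_convexHull ℝ _).segment_subset hx hy
  exact ⟨v + w, v - w, hsub h1, hsub h2, ne_add_sub hw, mid_eq v w⟩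

lemma main_pos {F : Finset (Fin 2 → ℝ)} {a b c v : Fin 2 → ℤ}
    (ha : coeR a ∈ convexHull ℝ (↑F : Set (Fin 2 → ℝ)))
    (hb : coeR b ∈ convexHull ℝ (↑F : Set (Fin 2 → ℝ)))
    (hc : coeR c ∈ convexHull ℝ (↑F : Set (Fin 2 → ℝ)))
    (hpos : 0 < sd b c a)
    (hv : coeR v ∈ convexHull ℝ ({coeR a, coeR b, coeR c} : Set (Fin 2 → ℝ)))
    (hva : v ≠ a) (hvb : v ≠ b) (hvc : v ≠ c) :
    (∃ v₁ v₂ : Fin 2 → ℤ, coeR v₁ ∈ convexHull ℝ (↑F : Set (Fin 2 → ℝ)) ∧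
        coeR v₂ ∈ convexHull ℝ (↑F : Set (Fin 2 → ℝ)) ∧ v₁ ≠ v₂ ∧
        coeR v = (2⁻¹ : ℝ) • (coeR v₁ + coeR v₂)) ∨
    (∃ v₁ v₂ v₃ : Fin 2 → ℤ, coeR v₁ ∈ convexHull ℝ (↑F : Set (Fin 2 → ℝ)) ∧
        coeR v₂ ∈ convexHull ℝ (↑F : Set (Fin 2 → ℝ)) ∧
        coeR v₃ ∈ convexHull ℝ (↑F : Set (Fin 2 → ℝ)) ∧
        v₁ ≠ v₂ ∧ v₁ ≠ v₃ ∧ v₂ ≠ v₃ ∧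
        coeR v = (3⁻¹ : ℝ) • (coeR v₁ + coeR v₂ + coeR v₃)) := by
  have hsubhull : convexHull ℝ ({coeR a, coeR b, coeR c} : Set (Fin 2 → ℝ)) ⊆
      convexHull ℝ (↑F : Set (Fin 2 → ℝ)) := by
    apply convexHull_min ?_ (convex_convexHull ℝ _)
    intro X hX
    simp only [Set.mem_insert_iff, Set.mem_singleton_iff] at hX
    rcases hX with rfl | rfl | rfl
    exacts [ha, hb, hc]
  obtain ⟨w1, w2, w3, hw1, hw2, hw3, hws, hvco⟩ := hull3 hv
  have hmem : mem3 a b c v := mem3_of_weights hpos.le hw1 hw2 hw3 hws (by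
    intro i
    have := hvco i
    simpa [coeR] using this)
  rcases descent (LSet a b c).card a b c v (le_refl _) hpos hmem hva hvb hvc with
    ⟨w, hw, h1, h2⟩ | ⟨p, q, r, h1, h2, h3, h4, h5, h6, h7⟩
  · exact Or.inl ⟨v + w, v - w, hsubhull (mem3_hull hpos h1), hsubhull (mem3_hull hpos h2),
      ne_add_sub hw, mid_eq v w⟩
  · refine Or.inr ⟨p, q, r, hsubhull (mem3_hull hpos h1), hsubhull (mem3_hull hpos h2),
      hsubhull (mem3_hull hpos h3), h4, h5, h6, ?_⟩
    funext i
    simp only [coeR, Pi.smul_apply, Pi.add_apply, smul_eq_mul]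
    have := h7 i
    have hcast : ((p i : ℝ) + q i + r i) = 3 * v i := by exact_mod_cast this
    linarith

end mainhelpers

/-- every lattice point `v` in the interior of a lattice polygon `P` is
either the midpoint of two distinct lattice points of `P`, or the centroid of three
pairwise distinct lattice points of `P`. -/
theorem interior_lattice_point_is_midpoint_or_centroid
    (P : Set (Fin 2 → ℝ)) (V : Finset (Fin 2 → ℤ))
    (hP : P = convexHull ℝ ↑(V.image coeR))
    (hdim : affineSpan ℝ P = ⊤)
    (v : Fin 2 → ℤ) (hv : coeR v ∈ interior P) :
    (∃ v₁ v₂ : Fin 2 → ℤ, coeR v₁ ∈ P ∧ coeR v₂ ∈ P ∧ v₁ ≠ v₂ ∧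
        coeR v = (2⁻¹ : ℝ) • (coeR v₁ + coeR v₂)) ∨
    (∃ v₁ v₂ v₃ : Fin 2 → ℤ, coeR v₁ ∈ P ∧ coeR v₂ ∈ P ∧ coeR v₃ ∈ P ∧
        v₁ ≠ v₂ ∧ v₁ ≠ v₃ ∧ v₂ ≠ v₃ ∧
        coeR v = (3⁻¹ : ℝ) • (coeR v₁ + coeR v₂ + coeR v₃)) := by
  subst hP
  set F := V.image coeR with hF
  have hvP : coeR v ∈ convexHull ℝ (↑F : Set (Fin 2 → ℝ)) := interior_subset hv
  have hnhds : convexHull ℝ (↑F : Set (Fin 2 → ℝ)) ∈ nhds (coeR v) :=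
    mem_interior_iff_mem_nhds.mp hv
  obtain ⟨ε, hε, hball⟩ := Metric.mem_nhds_iff.mp hnhds
  -- step 1 : v is in the hull of the other points
  have hvErase : coeR v ∈ convexHull ℝ (↑(F.erase (coeR v)) : Set (Fin 2 → ℝ)) := by
    by_cases hvS : coeR v ∈ F
    · -- find a point of F different from v
      have hA : ∃ A ∈ F, A ≠ coeR v := by
        by_contra hno
        push_neg at hno
        have hsub : (↑F : Set (Fin 2 → ℝ)) ⊆ {coeR v} := by
          intro X hX
          exact hno X hX
        have hPsub : convexHull ℝ (↑F : Set (Fin 2 → ℝ)) ⊆ {coeR v} :=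
          convexHull_min hsub (convex_singleton _)
        have hspan : affineSpan ℝ (convexHull ℝ (↑F : Set (Fin 2 → ℝ))) ≤
            affineSpan ℝ ({coeR v} : Set (Fin 2 → ℝ)) := affineSpan_mono ℝ hPsub
        rw [hdim] at hspan
        have hy : (coeR v + fun _ => (1:ℝ)) ∈ affineSpan ℝ ({coeR v} : Set (Fin 2 → ℝ)) :=
          hspan trivial
        rw [AffineSubspace.mem_affineSpan_singleton] at hy
        have := congrFun hy 0
        simp only [Pi.add_apply] at this
        linarith
      obtain ⟨A, hAF, hAne⟩ := hA
      set u : Fin 2 → ℝ := coeR v - A with hu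
      have hune : u ≠ 0 := sub_ne_zero.mpr (Ne.symm hAne)
      have hnorm : 0 < ‖u‖ := norm_pos_iff.mpr hune
      set δ : ℝ := ε / (2 * ‖u‖) with hδ
      have hδpos : 0 < δ := by positivity
      set z : Fin 2 → ℝ := coeR v + δ • u with hz
      have hzP : z ∈ convexHull ℝ (↑F : Set (Fin 2 → ℝ)) := by
        apply hball
        rw [Metric.mem_ball, dist_eq_norm]
        have hzv : z - coeR v = δ • u := by rw [hz]; abel
        rw [hzv, norm_smul, Real.norm_eq_abs, abs_of_pos hδpos]
        have : δ * ‖u‖ = ε / 2 := by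
          rw [hδ]; field_simp
        rw [this]
        linarith
      obtain ⟨wz, hwz0, hwz1, hwzc⟩ := Finset.mem_convexHull.mp hzP
      rw [Finset.centerMass_eq_of_sum_1 _ _ hwz1] at hwzc
      simp only [id_eq] at hwzc
      -- modified weights
      set w' : (Fin 2 → ℝ) → ℝ := fun y => wz y + if y = A then δ else 0 with hw'
      have hw'0 : ∀ y ∈ F, 0 ≤ w' y := by
        intro y hy
        rw [hw']
        show 0 ≤ wz y + if y = A then δ else 0
        have := hwz0 y hy
        by_cases hyA : y = A
        · rw [if_pos hyA]
          linarith
        · rw [if_neg hyA, add_zero]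
          exact this
      have hw'sum : ∑ y ∈ F, w' y = 1 + δ := by
        rw [hw', Finset.sum_add_distrib, hwz1, Finset.sum_ite_eq' F A (fun _ => δ)]
        simp [hAF]
      have hw'vec : ∑ y ∈ F, w' y • y = (1 + δ) • coeR v := by
        rw [hw', ]
        have : ∀ y, (wz y + if y = A then δ else 0) • y
            = wz y • y + (if y = A then δ • y else 0) := by
          intro y
          by_cases hyA : y = A <;> simp [hyA, add_smul]
        simp_rw [this]
        rw [Finset.sum_add_distrib, hwzc, Finset.sum_ite_eq' F A (fun y => δ • y)]
        simp only [hAF, if_true]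
        rw [hz, hu]
        funext i
        simp only [Pi.add_apply, Pi.smul_apply, Pi.sub_apply, smul_eq_mul]
        ring
      -- remove v
      have hvW : w' (coeR v) ≤ 1 := by
        rw [hw']
        simp only [if_neg (Ne.symm hAne)]
        have hle : wz (coeR v) ≤ ∑ y ∈ F, wz y :=
          Finset.single_le_sum (fun y hy => hwz0 y hy) hvS
        rw [hwz1] at hle
        simpa using hle
      set T : ℝ := (1 + δ) - w' (coeR v) with hT
      have hTpos : 0 < T := by rw [hT]; linarith
      have hsum_erase : ∑ y ∈ F.erase (coeR v), w' y = T := by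
        have := Finset.sum_erase_add F w' hvS
        rw [hw'sum] at this
        rw [hT]; linarith
      have hvec_erase : ∑ y ∈ F.erase (coeR v), w' y • y = T • coeR v := by
        have := Finset.sum_erase_add F (fun y => w' y • y) hvS
        rw [hw'vec] at this
        rw [hT, sub_smul]
        rw [← this]
        abel
      have := Finset.centerMass_mem_convexHull (t := F.erase (coeR v)) (w := w')
        (z := id) (s := (↑(F.erase (coeR v)) : Set (Fin 2 → ℝ)))
        (fun y hy => hw'0 y (Finset.mem_of_mem_erase hy))
        (by rw [hsum_erase]; exact hTpos)
        (fun y hy => Finset.mem_coe.mpr hy)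
      rw [Finset.centerMass, hsum_erase, (by simpa using hvec_erase :
        ∑ y ∈ F.erase (coeR v), w' y • id y = T • coeR v)] at this
      rwa [inv_smul_smul₀ (ne_of_gt hTpos)] at this
    · rw [Finset.erase_eq_of_notMem hvS]
      exact hvP
  -- step 2 : Caratheodory
  rw [convexHull_eq_union] at hvErase
  simp only [Set.mem_iUnion] at hvErase
  obtain ⟨t, hts, hai, hvt⟩ := hvErase
  have hcard3 : t.card ≤ 3 := by
    have h1 := hai.card_le_finrank_succ
    rw [Fintype.card_coe] at h1
    have h2 : Module.finrank ℝ
        (vectorSpan ℝ (Set.range ((↑) : ↥t → (Fin 2 → ℝ)))) ≤ 2 := by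
      have := Submodule.finrank_le (vectorSpan ℝ (Set.range ((↑) : ↥t → (Fin 2 → ℝ))))
      rwa [Module.finrank_fin_fun] at this
    omega
  have htlat : ∀ X ∈ t, (∃ x ∈ V, coeR x = X) ∧ X ≠ coeR v := by
    intro X hX
    have hXe : X ∈ F.erase (coeR v) := hts hX
    have hXF : X ∈ F := Finset.mem_of_mem_erase hXe
    rw [hF, Finset.mem_image] at hXF
    obtain ⟨x, hxV, hxX⟩ := hXF
    exact ⟨⟨x, hxV, hxX⟩, Finset.ne_of_mem_erase hXe⟩
  have htP : ∀ X ∈ t, X ∈ convexHull ℝ (↑F : Set (Fin 2 → ℝ)) := by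
    intro X hX
    exact subset_convexHull ℝ _ (Finset.mem_coe.mpr
      (Finset.mem_of_mem_erase (hts hX)))
  interval_cases hc : t.card
  · -- empty
    exfalso
    rw [Finset.card_eq_zero] at hc
    subst hc
    simp only [Finset.coe_empty, convexHull_empty] at hvt
    exact hvt
  · -- one point
    exfalso
    rw [Finset.card_eq_one] at hc
    obtain ⟨X, rfl⟩ := hc
    simp only [Finset.coe_singleton, convexHull_singleton, Set.mem_singleton_iff] at hvt
    exact (htlat X (by simp)).2 hvt.symm
  · -- segment
    rw [Finset.card_eq_two] at hc
    obtain ⟨X, Y, hXY, rfl⟩ := hc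
    have hXt : X ∈ ({X, Y} : Finset (Fin 2 → ℝ)) := by simp
    have hYt : Y ∈ ({X, Y} : Finset (Fin 2 → ℝ)) := by simp
    obtain ⟨⟨x, hxV, hxX⟩, hXv⟩ := htlat X hXt
    obtain ⟨⟨y, hyV, hyY⟩, hYv⟩ := htlat Y hYt
    rw [show ((↑({X, Y} : Finset (Fin 2 → ℝ)) : Set (Fin 2 → ℝ))) = {X, Y} by simp,
      convexHull_pair] at hvt
    subst hxX hyY
    have hvx : v ≠ x := fun h => hXv (by rw [h])
    have hvy : v ≠ y := fun h => hYv (by rw [h])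
    exact Or.inl (main_seg (htP _ hXt) (htP _ hYt) hvt hvx hvy)
  · -- triangle
    rw [Finset.card_eq_three] at hc
    obtain ⟨X, Y, Z, hXY, hXZ, hYZ, rfl⟩ := hc
    have hXt : X ∈ ({X, Y, Z} : Finset (Fin 2 → ℝ)) := by simp
    have hYt : Y ∈ ({X, Y, Z} : Finset (Fin 2 → ℝ)) := by simp
    have hZt : Z ∈ ({X, Y, Z} : Finset (Fin 2 → ℝ)) := by simp
    obtain ⟨⟨a, haV, haX⟩, hXv⟩ := htlat X hXt
    obtain ⟨⟨b, hbV, hbY⟩, hYv⟩ := htlat Y hYt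
    obtain ⟨⟨c, hcV, hcZ⟩, hZv⟩ := htlat Z hZt
    subst haX hbY hcZ
    rw [show ((↑({coeR a, coeR b, coeR c} : Finset (Fin 2 → ℝ)) : Set (Fin 2 → ℝ)))
      = {coeR a, coeR b, coeR c} by simp] at hvt
    have hva : v ≠ a := fun h => hXv (by rw [h])
    have hvb : v ≠ b := fun h => hYv (by rw [h])
    have hvc : v ≠ c := fun h => hZv (by rw [h])
    rcases lt_trichotomy (sd b c a) 0 with hneg | hzero | hpos
    · -- swap b and c
      have hpos' : 0 < sd c b a := by
        rw [sd_swap c b a]; omega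
      have hvt' : coeR v ∈ convexHull ℝ ({coeR a, coeR c, coeR b} : Set (Fin 2 → ℝ)) := by
        rw [Set.pair_comm (coeR c) (coeR b)]
        exact hvt
      exact main_pos (htP _ hXt) (htP _ hZt) (htP _ hYt) hpos' hvt' hva hvc hvb
    · -- collinear
      obtain ⟨x, y, hxm, hym, hvx, hvy, hseg⟩ := collinR hvt hzero hva hvb hvc
      have hsubhull : convexHull ℝ ({coeR a, coeR b, coeR c} : Set (Fin 2 → ℝ)) ⊆
          convexHull ℝ (↑F : Set (Fin 2 → ℝ)) := by
        apply convexHull_min ?_ (convex_convexHull ℝ _)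
        intro W hW
        simp only [Set.mem_insert_iff, Set.mem_singleton_iff] at hW
        rcases hW with rfl | rfl | rfl
        exacts [htP _ hXt, htP _ hYt, htP _ hZt]
      exact Or.inl (main_seg (hsubhull hxm) (hsubhull hym) hseg hvx hvy)
    · exact main_pos (htP _ hXt) (htP _ hYt) (htP _ hZt) hpos hvt hva hvb hvc
end

section
/- Let v, v₁, v₂, v₃ ∈ R² with v = (v₁+v₂+v₃)/3. Then (1/2)(v+v₁)(v+v₁)^t + (1/2)(v+v₂)(v+v₂)^t + (1/2)(v+v₃)(v+v₃)^t − v v^t = (7/18)(v₁+v₂+v₃)(v₁+v₂+v₃)^t + (1/2)v₁v₁^t + (1/2)v₂v₂^t + (1/2)v₃v₃^t; in particular the left-hand side is positive semidefinite. -/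
open Finset

lemma msq_posSemidef (u : Fin 2 → ℝ) : (msq u).PosSemidef := by
  rw [Matrix.posSemidef_iff_dotProduct_mulVec]
  constructor
  · ext i j
    simp [msq, Matrix.vecMulVec, mul_comm]
  · intro x
    have h : dotProduct (star x) ((msq u).mulVec x)
        = (u 0 * x 0 + u 1 * x 1) * (u 0 * x 0 + u 1 * x 1) := by
      simp [msq, dotProduct, Matrix.mulVec, Matrix.vecMulVec, Fin.sum_univ_two]
      ring
    rw [h]
    exact mul_self_nonneg _

lemma psd_smul {M : Matrix (Fin 2) (Fin 2) ℝ} (hM : M.PosSemidef) {c : ℝ} (hc : 0 ≤ c) :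
    (c • M).PosSemidef := by
  rw [Matrix.posSemidef_iff_dotProduct_mulVec]
  refine ⟨?_, fun x => ?_⟩
  · unfold Matrix.IsHermitian
    rw [Matrix.conjTranspose_smul]
    rw [hM.1.eq]
    norm_num
  · rw [Matrix.smul_mulVec, dotProduct_smul, smul_eq_mul]
    exact mul_nonneg hc (hM.dotProduct_mulVec_nonneg x)

/-- if `v = (v₁+v₂+v₃)/3` then
`(1/2)(v+v₁)(v+v₁)ᵗ + (1/2)(v+v₂)(v+v₂)ᵗ + (1/2)(v+v₃)(v+v₃)ᵗ − vvᵗ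
 = (7/18)(v₁+v₂+v₃)(v₁+v₂+v₃)ᵗ + (1/2)v₁v₁ᵗ + (1/2)v₂v₂ᵗ + (1/2)v₃v₃ᵗ`;
in particular the left-hand side is positive semidefinite. -/
theorem centroid_sum_of_squares_identity
    (v v₁ v₂ v₃ : Fin 2 → ℝ) (hv : v = (3⁻¹ : ℝ) • (v₁ + v₂ + v₃)) :
    (((1 : ℝ) / 2) • msq (v + v₁) + ((1 : ℝ) / 2) • msq (v + v₂)
        + ((1 : ℝ) / 2) • msq (v + v₃) - msq v
      = ((7 : ℝ) / 18) • msq (v₁ + v₂ + v₃) + ((1 : ℝ) / 2) • msq v₁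
        + ((1 : ℝ) / 2) • msq v₂ + ((1 : ℝ) / 2) • msq v₃) ∧
    (((1 : ℝ) / 2) • msq (v + v₁) + ((1 : ℝ) / 2) • msq (v + v₂)
        + ((1 : ℝ) / 2) • msq (v + v₃) - msq v).PosSemidef := by
  have heq : (((1 : ℝ) / 2) • msq (v + v₁) + ((1 : ℝ) / 2) • msq (v + v₂)
        + ((1 : ℝ) / 2) • msq (v + v₃) - msq v
      = ((7 : ℝ) / 18) • msq (v₁ + v₂ + v₃) + ((1 : ℝ) / 2) • msq v₁
        + ((1 : ℝ) / 2) • msq v₂ + ((1 : ℝ) / 2) • msq v₃) := by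
    subst hv
    ext i j
    simp [msq, Matrix.vecMulVec]
    ring
  refine ⟨heq, heq ▸ ?_⟩
  have h0 : (0:ℝ) ≤ 7/18 := by norm_num
  have h1 : (0:ℝ) ≤ 1/2 := by norm_num
  exact (((psd_smul (msq_posSemidef _) h0).add (psd_smul (msq_posSemidef _) h1)).add
    (psd_smul (msq_posSemidef _) h1)).add (psd_smul (msq_posSemidef _) h1)
end
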